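/- arXiv:1707.02522 — 3 statements merged into one kernel-verified Lean document; each statement's English description precedes it below -/
import Mathlib

section
/- The monotone C_{Δ,max} admits the simplified form: for every state ρ, min over σ in the closure of A_ρ of D_max(ρ||σ) equals log₂ min{λ ≥ 0 : ρ ≤ λΔ(ρ) in the Loewner order}. -/
open scoped Matrix ComplexOrder

namespace OneShot

variable {ι κ : Type*} [Fintype ι] [DecidableEq ι] [Fintype κ] [DecidableEq κ]

/-- A quantum state: a positive semidefinite matrix with unit trace. -/
def IsState (ρ : Matrix ι ι ℂ) : Prop := ρ.PosSemidef ∧ ρ.trace = 1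

/-- An incoherent state: a state that is diagonal in the computational basis. -/
def IsIncoherent (ρ : Matrix ι ι ℂ) : Prop := IsState ρ ∧ ρ.IsDiag

/-- The completely dephasing channel `Δ`. -/
def dephase (ρ : Matrix ι ι ℂ) : Matrix ι ι ℂ := Matrix.diagonal fun i => ρ i i

/-- The max-relative entropy of coherence
`C_max(ρ) = min_{δ ∈ 𝓘} D_max(ρ‖δ) = log₂ min {λ ≥ 0 | ∃ δ ∈ 𝓘, ρ ≤ λ δ}`. -/
noncomputable def Cmax (ρ : Matrix ι ι ℂ) : ℝ :=
  Real.logb 2 (sInf {l : ℝ | 0 ≤ l ∧ ∃ δ, IsIncoherent δ ∧ (l • δ - ρ).PosSemidef})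

/-- `C_{Δ,max}(ρ) = log₂ min {λ ≥ 0 | ρ ≤ λ Δ(ρ)}`. -/
noncomputable def CDmax (ρ : Matrix ι ι ℂ) : ℝ :=
  Real.logb 2 (sInf {l : ℝ | 0 ≤ l ∧ (l • dephase ρ - ρ).PosSemidef})

/-- Complete positivity of a linear map on matrices. -/
def CompletelyPositive (Λ : Matrix ι ι ℂ →ₗ[ℂ] Matrix κ κ ℂ) : Prop :=
  ∀ (k : ℕ) (M : Matrix (Fin k × ι) (Fin k × ι) ℂ), M.PosSemidef →
    (Matrix.of fun p q : Fin k × κ =>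
      Λ (Matrix.of fun x y => M (p.1, x) (q.1, y)) p.2 q.2).PosSemidef

/-- Trace preservation. -/
def TracePreserving (Λ : Matrix ι ι ℂ →ₗ[ℂ] Matrix κ κ ℂ) : Prop :=
  ∀ A, (Λ A).trace = A.trace

/-- A maximally incoherent operation (MIO): a CPTP map sending every incoherent state
to an incoherent state. -/
def IsMIO (Λ : Matrix ι ι ℂ →ₗ[ℂ] Matrix κ κ ℂ) : Prop :=
  CompletelyPositive Λ ∧ TracePreserving Λ ∧ ∀ δ, IsIncoherent δ → IsIncoherent (Λ δ)

/-- A dephasing-covariant incoherent operation (DIO): a CPTP map commuting with `Δ`. -/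
def IsDIO (Λ : Matrix ι ι ℂ →ₗ[ℂ] Matrix ι ι ℂ) : Prop :=
  CompletelyPositive Λ ∧ TracePreserving Λ ∧ ∀ ρ, Λ (dephase ρ) = dephase (Λ ρ)

/-- An incoherent-preserving (Kraus) operator: `K δ Kᴴ` is a nonnegative multiple of an
incoherent state, for every incoherent state `δ`. -/
def IncoherentPreserving (K : Matrix κ ι ℂ) : Prop :=
  ∀ δ : Matrix ι ι ℂ, IsIncoherent δ →
    ∃ c : ℝ, 0 ≤ c ∧ ∃ δ' : Matrix κ κ ℂ, IsIncoherent δ' ∧ K * δ * Kᴴ = (c : ℂ) • δ'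

/-- An incoherent operation (IO). -/
def IsIO (Λ : Matrix ι ι ℂ →ₗ[ℂ] Matrix κ κ ℂ) : Prop :=
  ∃ (N : ℕ) (K : Fin N → Matrix κ ι ℂ),
    (∀ n, IncoherentPreserving (K n)) ∧ (∑ n, (K n)ᴴ * K n = 1) ∧
    ∀ ρ, Λ ρ = ∑ n, K n * ρ * (K n)ᴴ

/-- A strictly incoherent operation (SIO). -/
def IsSIO (Λ : Matrix ι ι ℂ →ₗ[ℂ] Matrix κ κ ℂ) : Prop :=
  ∃ (N : ℕ) (K : Fin N → Matrix κ ι ℂ),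
    (∀ n, IncoherentPreserving (K n)) ∧ (∀ n, IncoherentPreserving (K n)ᴴ) ∧
    (∑ n, (K n)ᴴ * K n = 1) ∧ ∀ ρ, Λ ρ = ∑ n, K n * ρ * (K n)ᴴ

/-- The outer product `|ψ⟩⟨ψ|`. -/
def outer (ψ : ι → ℂ) : Matrix ι ι ℂ := Matrix.of fun i j => ψ i * star (ψ j)

/-- `T ψ` is the number of nonzero computational-basis coefficients of `ψ`. -/
noncomputable def T (ψ : ι → ℂ) : ℕ := (Finset.univ.filter fun i => ψ i ≠ 0).card

/-- A finite pure-state decomposition `ρ = Σ_j p_j |ψ_j⟩⟨ψ_j|`. -/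
def IsDecomposition (ρ : Matrix ι ι ℂ) (n : ℕ) (p : Fin n → ℝ) (ψ : Fin n → ι → ℂ) : Prop :=
  (∀ j, 0 < p j) ∧ (∑ j, p j = 1) ∧ (∀ j, ∑ i, Complex.normSq (ψ j i) = 1) ∧
    ρ = ∑ j, p j • outer (ψ j)

/-- `C_0(ρ) = min over decompositions of max_j log₂ T(ψ_j)`. -/
noncomputable def C0 (ρ : Matrix ι ι ℂ) : ℝ :=
  sInf { r | ∃ n p ψ, IsDecomposition ρ n p ψ ∧
    r = Real.logb 2 (↑(Finset.univ.sup fun j => T (ψ j)) : ℝ) }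

/-- Matrix square root of a positive semidefinite matrix (junk value `0` elsewhere). -/
noncomputable def msqrt (A : Matrix ι ι ℂ) : Matrix ι ι ℂ :=
  letI := Classical.propDecidable A.PosSemidef
  if h : A.PosSemidef then
    (h.1.eigenvectorUnitary : Matrix ι ι ℂ) *
      Matrix.diagonal (fun i => ((Real.sqrt (h.1.eigenvalues i) : ℝ) : ℂ)) *
      (star h.1.eigenvectorUnitary : Matrix ι ι ℂ)
  else 0

/-- Uhlmann fidelity `F(ρ,σ) = (Tr √(√ρ σ √ρ))²`. -/
noncomputable def Fid (ρ σ : Matrix ι ι ℂ) : ℝ :=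
  ((msqrt (msqrt ρ * σ * msqrt ρ)).trace.re) ^ 2

/-- Smoothed `C_max`. -/
noncomputable def Cmaxeps (ρ : Matrix ι ι ℂ) (ε : ℝ) : ℝ :=
  sInf { r | ∃ ρ', IsState ρ' ∧ 1 - ε ≤ Fid ρ ρ' ∧ r = Cmax ρ' }

/-- Smoothed `C_{Δ,max}`. -/
noncomputable def CDmaxeps (ρ : Matrix ι ι ℂ) (ε : ℝ) : ℝ :=
  sInf { r | ∃ ρ', IsState ρ' ∧ 1 - ε ≤ Fid ρ ρ' ∧ r = CDmax ρ' }

/-- Smoothed `C_0`. -/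
noncomputable def C0eps (ρ : Matrix ι ι ℂ) (ε : ℝ) : ℝ :=
  sInf { r | ∃ ρ', IsState ρ' ∧ 1 - ε ≤ Fid ρ ρ' ∧ r = C0 ρ' }

/-- The maximally coherent state `Ψ_M = |Ψ_M⟩⟨Ψ_M|` of dimension `M`. -/
noncomputable def PsiM (M : ℕ) : Matrix (Fin M) (Fin M) ℂ := Matrix.of fun _ _ => (1 : ℂ) / M

/-- One-shot coherence cost under MIO. -/
noncomputable def CMIOeps (ρ : Matrix ι ι ℂ) (ε : ℝ) : ℝ :=
  sInf { r | ∃ M : ℕ, 1 ≤ M ∧ r = Real.logb 2 M ∧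
    ∃ Λ : Matrix (Fin M) (Fin M) ℂ →ₗ[ℂ] Matrix ι ι ℂ, IsMIO Λ ∧ 1 - ε ≤ Fid ρ (Λ (PsiM M)) }

/-- One-shot coherence cost under DIO. -/
noncomputable def CDIOeps (ρ : Matrix ι ι ℂ) (ε : ℝ) : ℝ :=
  sInf { r | ∃ M : ℕ, 1 ≤ M ∧ r = Real.logb 2 M ∧
    ∃ Λ : Matrix (Fin M) (Fin M) ℂ →ₗ[ℂ] Matrix ι ι ℂ,
      CompletelyPositive Λ ∧ TracePreserving Λ ∧ (∀ ω, Λ (dephase ω) = dephase (Λ ω)) ∧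
      1 - ε ≤ Fid ρ (Λ (PsiM M)) }

/-- One-shot coherence cost under IO. -/
noncomputable def CIOeps (ρ : Matrix ι ι ℂ) (ε : ℝ) : ℝ :=
  sInf { r | ∃ M : ℕ, 1 ≤ M ∧ r = Real.logb 2 M ∧
    ∃ Λ : Matrix (Fin M) (Fin M) ℂ →ₗ[ℂ] Matrix ι ι ℂ, IsIO Λ ∧ 1 - ε ≤ Fid ρ (Λ (PsiM M)) }

/-- One-shot coherence cost under SIO. -/
noncomputable def CSIOeps (ρ : Matrix ι ι ℂ) (ε : ℝ) : ℝ :=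
  sInf { r | ∃ M : ℕ, 1 ≤ M ∧ r = Real.logb 2 M ∧
    ∃ Λ : Matrix (Fin M) (Fin M) ℂ →ₗ[ℂ] Matrix ι ι ℂ, IsSIO Λ ∧ 1 - ε ≤ Fid ρ (Λ (PsiM M)) }

/-- Matrix logarithm (base 2) via the spectral decomposition, with `log₂ 0 = 0` junk
convention on the kernel, and junk value `0` on non-Hermitian matrices. -/
noncomputable def mlog2 (A : Matrix ι ι ℂ) : Matrix ι ι ℂ :=
  letI := Classical.propDecidable A.IsHermitian
  if h : A.IsHermitian then
    (h.eigenvectorUnitary : Matrix ι ι ℂ) *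
      Matrix.diagonal (fun i => (Real.logb 2 (h.eigenvalues i) : ℂ)) *
      (h.eigenvectorUnitary : Matrix ι ι ℂ)ᴴ
  else 0

/-- The relative entropy of coherence `C_r(ρ) = min_{δ ∈ 𝓘} S(ρ‖δ)`, where the minimum
is (equivalently) restricted to those `δ` whose support contains the support of `ρ`,
on which `S(ρ‖δ) = Tr[ρ (log₂ ρ − log₂ δ)]` is finite. -/
noncomputable def Cr (ρ : Matrix ι ι ℂ) : ℝ :=
  sInf { r | ∃ δ, IsIncoherent δ ∧ (∀ v : ι → ℂ, δ.mulVec v = 0 → ρ.mulVec v = 0) ∧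
    r = ((ρ * (mlog2 ρ - mlog2 δ)).trace).re }

/-- Von Neumann entropy (base 2). -/
noncomputable def vN (σ : Matrix ι ι ℂ) : ℝ := -((σ * mlog2 σ).trace.re)

/-- The coherence of formation. -/
noncomputable def Cf (ρ : Matrix ι ι ℂ) : ℝ :=
  sInf { r | ∃ n p ψ, IsDecomposition ρ n p ψ ∧
    r = ∑ j, p j * vN (dephase (outer (ψ j))) }

/-- The set `A_ρ = { (1/t)[(1+t)Δ(ρ) − ρ] : t > 0, (1+t)Δ(ρ) − ρ ≥ 0 }`. -/
def Aset (ρ : Matrix ι ι ℂ) : Set (Matrix ι ι ℂ) :=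
  { σ | ∃ t : ℝ, 0 < t ∧ ((1 + t) • dephase ρ - ρ).PosSemidef ∧
      σ = t⁻¹ • ((1 + t) • dephase ρ - ρ) }

/-- The `n`-fold tensor power `ρ^{⊗ n}`. -/
def tpow (ρ : Matrix ι ι ℂ) (n : ℕ) : Matrix (Fin n → ι) (Fin n → ι) ℂ :=
  Matrix.of fun i j => ∏ t, ρ (i t) (j t)

section AuxSimplified

open scoped ComplexOrder

variable {n : Type*} [Fintype n] [DecidableEq n]

lemma diag_entry_nonneg' {A : Matrix n n ℂ} (hA : A.PosSemidef) (i : n) : 0 ≤ A i i := by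
  exact hA.diag_nonneg

lemma psd_trace_nonneg' {A : Matrix n n ℂ} (hA : A.PosSemidef) : 0 ≤ A.trace := by
  rw [Matrix.trace]
  exact Finset.sum_nonneg fun i _ => diag_entry_nonneg' hA i

lemma psd_smul_real' {A : Matrix n n ℂ} (hA : A.PosSemidef) {r : ℝ} (hr : 0 ≤ r) :
    (r • A).PosSemidef := by
  have h : (r • A) = ((r : ℂ) • A) := by
    ext i j; simp [Complex.real_smul]
  rw [h]
  exact hA.smul (by exact_mod_cast hr : (0 : ℂ) ≤ (r : ℂ))

lemma dephase_posSemidef' {A : Matrix n n ℂ} (hA : A.PosSemidef) : (dephase A).PosSemidef :=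
  Matrix.PosSemidef.diagonal fun i => diag_entry_nonneg' hA i

lemma closure_Aset_subset' {d : ℕ} (ρ : Matrix (Fin d) (Fin d) ℂ) :
    closure (Aset ρ) ⊆ {σ | ∃ s : ℝ, 0 ≤ s ∧ σ = dephase ρ + s • (dephase ρ - ρ)} := by
  set Dm := dephase ρ with hDm
  set D := Dm - ρ with hDdef
  apply closure_minimal
  · rintro σ ⟨t, ht, _, rfl⟩
    refine ⟨t⁻¹, le_of_lt (inv_pos.2 ht), ?_⟩
    have ht' : t ≠ 0 := ne_of_gt ht
    rw [hDdef]
    match_scalars <;> field_simp <;> ring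
  · by_cases hD0 : D = 0
    · have hs : {σ | ∃ s : ℝ, 0 ≤ s ∧ σ = Dm + s • D} = {Dm} := by
        ext σ
        simp only [hD0, smul_zero, add_zero, Set.mem_setOf_eq, Set.mem_singleton_iff]
        exact ⟨fun ⟨s, _, h⟩ => h, fun h => ⟨0, le_refl 0, h⟩⟩
      rw [hs]
      exact isClosed_singleton
    · obtain ⟨a, b, hab⟩ : ∃ a b, D a b ≠ 0 := by
        by_contra h
        push_neg at h
        exact hD0 (by ext a b; simpa using h a b)
      have heval : Continuous fun σ : Matrix (Fin d) (Fin d) ℂ => σ a b :=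
        (continuous_apply b).comp (continuous_apply a)
      have hcont : Continuous fun σ : Matrix (Fin d) (Fin d) ℂ =>
          ((σ a b - Dm a b) / D a b).re :=
        Complex.continuous_re.comp ((heval.sub continuous_const).div_const _)
      have hg : Continuous fun σ : Matrix (Fin d) (Fin d) ℂ =>
          Dm + (((σ a b - Dm a b) / D a b).re) • D :=
        continuous_const.add (hcont.smul continuous_const)
      have hset : {σ | ∃ s : ℝ, 0 ≤ s ∧ σ = Dm + s • D} =
          {σ : Matrix (Fin d) (Fin d) ℂ | 0 ≤ ((σ a b - Dm a b) / D a b).re} ∩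
            {σ : Matrix (Fin d) (Fin d) ℂ | Dm + (((σ a b - Dm a b) / D a b).re) • D = σ} := by
        ext σ
        constructor
        · rintro ⟨s, hs, rfl⟩
          have hentry : ((Dm + s • D) a b - Dm a b) / D a b = (s : ℂ) := by
            rw [Matrix.add_apply, Matrix.smul_apply]
            rw [Complex.real_smul]
            field_simp
            ring
          have hs2 : ((s : ℂ) * D a b / D a b) = (s : ℂ) := by
            rw [mul_div_assoc, div_self hab, mul_one]
          refine ⟨?_, ?_⟩ <;>
            simp [Set.mem_setOf_eq, Matrix.add_apply, Matrix.smul_apply, Complex.real_smul,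
              hs2, hs]
        · rintro ⟨h1, h2⟩
          exact ⟨_, h1, h2.symm⟩
      rw [hset]
      exact (isClosed_le continuous_const hcont).inter (isClosed_eq hg continuous_id)

lemma dephase_mem_closure_Aset' {d : ℕ} {ρ : Matrix (Fin d) (Fin d) ℂ} {l : ℝ} (hl : 0 ≤ l)
    (hps : (l • dephase ρ - ρ).PosSemidef) (hDm : (dephase ρ).PosSemidef) :
    dephase ρ ∈ closure (Aset ρ) := by
  have hmem : ∀ m : ℕ, dephase ρ + (l + 1 + m)⁻¹ • (dephase ρ - ρ) ∈ Aset ρ := by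
    intro m
    have htpos : (0:ℝ) < l + 1 + m := by positivity
    refine ⟨l + 1 + m, htpos, ?_, ?_⟩
    · have hco : ((1 : ℝ) + (l + 1 + m)) • dephase ρ - ρ =
          (l • dephase ρ - ρ) + ((2 + m : ℝ)) • dephase ρ := by
        module
      rw [hco]
      exact hps.add (psd_smul_real' hDm (by positivity))
    · have ht' : (l + 1 + m : ℝ) ≠ 0 := ne_of_gt htpos
      match_scalars <;> field_simp <;> ring
  have h0 : Filter.Tendsto (fun m : ℕ => (l + 1 + m)⁻¹) Filter.atTop (nhds 0) := by
    apply Filter.Tendsto.comp tendsto_inv_atTop_zero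
    apply Filter.tendsto_atTop_add_const_left
    exact tendsto_natCast_atTop_atTop
  have hT : Filter.Tendsto (fun m : ℕ => dephase ρ + (l + 1 + m)⁻¹ • (dephase ρ - ρ))
      Filter.atTop (nhds (dephase ρ + (0 : ℝ) • (dephase ρ - ρ))) :=
    tendsto_const_nhds.add (h0.smul_const _)
  have hT' : Filter.Tendsto (fun m : ℕ => dephase ρ + (l + 1 + m)⁻¹ • (dephase ρ - ρ))
      Filter.atTop (nhds (dephase ρ)) := by simpa using hT
  exact mem_closure_of_tendsto hT' (Filter.Eventually.of_forall hmem)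

end AuxSimplified

/-- `C_{Δ,max}` admits the simplified form:
`min_{σ ∈ closure A_ρ} D_max(ρ‖σ) = log₂ min {λ ≥ 0 : ρ ≤ λ Δ(ρ)}`. -/
theorem CDmax_simplified_form {d : ℕ} (ρ : Matrix (Fin d) (Fin d) ℂ) (hρ : IsState ρ) :
    Real.logb 2 (sInf {l : ℝ | 0 ≤ l ∧ ∃ σ ∈ closure (Aset ρ), (l • σ - ρ).PosSemidef}) =
      CDmax ρ := by
  have hDm : (dephase ρ).PosSemidef := dephase_posSemidef' hρ.1
  have htrDm : (dephase ρ).trace = 1 := by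
    rw [dephase, Matrix.trace_diagonal]
    exact hρ.2
  have hset : {l : ℝ | 0 ≤ l ∧ ∃ σ ∈ closure (Aset ρ), (l • σ - ρ).PosSemidef} =
      {l : ℝ | 0 ≤ l ∧ (l • dephase ρ - ρ).PosSemidef} := by
    ext l
    simp only [Set.mem_setOf_eq]
    constructor
    · rintro ⟨hl, σ, hσc, hps⟩
      refine ⟨hl, ?_⟩
      obtain ⟨s, hs, rfl⟩ := closure_Aset_subset' ρ hσc
      rcases eq_or_lt_of_le hs with hs0 | hs0
      · rw [← hs0] at hps
        simpa using hps
      · have htr := psd_trace_nonneg' hps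
        have hσtr : (dephase ρ + s • (dephase ρ - ρ)).trace = 1 := by
          simp [Matrix.trace_add, Matrix.trace_smul, Matrix.trace_sub, htrDm, hρ.2]
        rw [Matrix.trace_sub, Matrix.trace_smul, hσtr, hρ.2] at htr
        have hl1 : (1 : ℝ) ≤ l := by
          have h1 : (0 : ℂ) ≤ (l : ℂ) - 1 := by simpa [Complex.real_smul] using htr
          have h2 : ((1 : ℝ) : ℂ) ≤ (l : ℂ) := by
            have := sub_nonneg.mp h1
            simpa using this
          exact_mod_cast h2
        have h1 : (0 : ℝ) < 1 + l * s := by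
          have : 0 ≤ l * s := mul_nonneg hl hs
          linarith
        have hkey : l • dephase ρ - ρ =
            (1 + l * s)⁻¹ • ((l • (dephase ρ + s • (dephase ρ - ρ)) - ρ) +
              (l * s * (l - 1)) • dephase ρ) := by
          have h2 : (1 + l * s) • (l • dephase ρ - ρ) =
              (l • (dephase ρ + s • (dephase ρ - ρ)) - ρ) +
                (l * s * (l - 1)) • dephase ρ := by
            module
          rw [← h2, smul_smul, inv_mul_cancel₀ (ne_of_gt h1), one_smul]
        rw [hkey]
        refine psd_smul_real' (hps.add (psd_smul_real' hDm ?_)) (le_of_lt (inv_pos.2 h1))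
        have : 0 ≤ l * s := mul_nonneg hl hs
        nlinarith
    · rintro ⟨hl, hps⟩
      exact ⟨hl, dephase ρ, dephase_mem_closure_Aset' hl hps hDm, hps⟩
  rw [CDmax, hset]

end OneShot
end

section
/- Upper bound of Theorem 4: for every state ρ and every ε ≥ 0, the one-shot coherence cost under MIO exceeds the smoothed max-relative entropy of coherence by at most one bit: C_MIO^ε(ρ) ≤ C_max^ε(ρ) + 1. -/
open scoped Matrix ComplexOrder

namespace OneShot

variable {ι κ : Type*} [Fintype ι] [DecidableEq ι] [Fintype κ] [DecidableEq κ]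

section Aux

variable {ι κ : Type*} [Fintype ι] [DecidableEq ι] [Fintype κ] [DecidableEq κ]

lemma realSmul_mat (r : ℝ) (A : Matrix ι κ ℂ) : r • A = (r : ℂ) • A := by
  ext i j
  simp [Complex.real_smul]

lemma smul_psd {c : ℂ} (hc : 0 ≤ c) {A : Matrix ι ι ℂ} (hA : A.PosSemidef) :
    (c • A).PosSemidef := by
  exact hA.smul hc

lemma trace_psd {A : Matrix ι ι ℂ} (hA : A.PosSemidef) : 0 ≤ A.trace := by
  exact hA.trace_nonneg

open scoped MatrixOrder in
lemma psd_eq_conj_mul_self {A : Matrix ι ι ℂ} (hA : A.PosSemidef) : ∃ R : Matrix ι ι ℂ, A = Rᴴ * R :=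
  ⟨CFC.sqrt A, by
    rw [(Matrix.nonneg_iff_posSemidef.mp (CFC.sqrt_nonneg A)).1.eq, CFC.sqrt_mul_sqrt_self A hA.nonneg]⟩

lemma trace_mul_psd {P Y : Matrix ι ι ℂ} (hP : P.PosSemidef) (hY : Y.PosSemidef) :
    0 ≤ (P * Y).trace := by
  obtain ⟨R, rfl⟩ := psd_eq_conj_mul_self hP
  have : (Rᴴ * R * Y).trace = (R * Y * Rᴴ).trace := by
    rw [Matrix.trace_mul_cycle, Matrix.mul_assoc, Matrix.mul_assoc, ← Matrix.mul_assoc]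
    exact Matrix.trace_mul_comm _ _
  rw [this]
  exact trace_psd (hY.mul_mul_conjTranspose_same R)

lemma sum4_comm {β₁ β₂ β₃ β₄ : Type*} [Fintype β₁] [Fintype β₂] [Fintype β₃] [Fintype β₄]
    (f : β₁ → β₂ → β₃ → β₄ → ℂ) :
    ∑ a, ∑ b, ∑ j, ∑ i, f a b j i = ∑ j, ∑ i, ∑ b, ∑ a, f a b j i :=
  calc ∑ a, ∑ b, ∑ j, ∑ i, f a b j i
      = ∑ b, ∑ a, ∑ j, ∑ i, f a b j i := Finset.sum_comm
    _ = ∑ b, ∑ j, ∑ a, ∑ i, f a b j i := Finset.sum_congr rfl fun _ _ => Finset.sum_comm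
    _ = ∑ b, ∑ j, ∑ i, ∑ a, f a b j i :=
        Finset.sum_congr rfl fun _ _ => Finset.sum_congr rfl fun _ _ => Finset.sum_comm
    _ = ∑ j, ∑ b, ∑ i, ∑ a, f a b j i := Finset.sum_comm
    _ = ∑ j, ∑ i, ∑ b, ∑ a, f a b j i := Finset.sum_congr rfl fun _ _ => Finset.sum_comm

lemma blocktrace_psd {α : Type*} [Fintype α] {M : Matrix (α × ι) (α × ι) ℂ}
    (hM : M.PosSemidef) {P : Matrix ι ι ℂ} (hP : P.PosSemidef) :
    (Matrix.of fun a b : α =>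
      (P * Matrix.of fun x y => M (a, x) (b, y)).trace).PosSemidef := by
  refine Matrix.PosSemidef.of_dotProduct_mulVec_nonneg ?_ ?_
  · ext a b
    have h1 : ∀ x y, star (M x y) = M y x := fun x y => congrFun (congrFun hM.1 y) x
    simp only [Matrix.conjTranspose_apply, Matrix.of_apply]
    rw [← Matrix.trace_conjTranspose, Matrix.conjTranspose_mul]
    have h2 : (Matrix.of fun x y => M (b, x) (a, y))ᴴ
        = Matrix.of fun x y => M (a, x) (b, y) := by
      ext x y
      simp [Matrix.conjTranspose_apply, h1]
    rw [h2, Matrix.trace_mul_comm, hP.1]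
  · intro v
    set E : Matrix (α × ι) ι ℂ :=
      Matrix.of fun x j => v x.1 * (if x.2 = j then 1 else 0) with hE
    have key : star v ⬝ᵥ (Matrix.of fun a b : α =>
        (P * Matrix.of fun x y => M (a, x) (b, y)).trace) *ᵥ v
        = (P * (Eᴴ * M * E)).trace := by
      simp only [dotProduct, Matrix.mulVec, Matrix.trace, Matrix.diag,
        Matrix.mul_apply, Matrix.of_apply, Matrix.conjTranspose_apply, hE,
        Fintype.sum_prod_type, mul_ite, ite_mul, mul_one, mul_zero, zero_mul, one_mul,
        Finset.sum_ite_eq, Finset.sum_ite_eq', Finset.mul_sum, Finset.sum_mul,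
        Finset.mem_univ, if_true, star_mul', apply_ite (star (R := ℂ)), star_one,
        star_zero, Pi.star_apply]
      rw [sum4_comm fun a b j i => star (v a) * (P j i * M (a, i) (b, j) * v b)]
      refine Finset.sum_congr rfl fun j _ => Finset.sum_congr rfl fun i _ =>
        Finset.sum_congr rfl fun b _ => Finset.sum_congr rfl fun a _ => by ring
    rw [key]
    have hY : (Eᴴ * M * E).PosSemidef := by
      have := hM.mul_mul_conjTranspose_same Eᴴ
      simpa using this
    exact trace_mul_psd hP hY

lemma kron_psd {C : Matrix ι ι ℂ} {A : Matrix κ κ ℂ} (hC : C.PosSemidef) (hA : A.PosSemidef) :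
    (Matrix.of fun p q : ι × κ => C p.1 q.1 * A p.2 q.2).PosSemidef := by
  obtain ⟨U, rfl⟩ := psd_eq_conj_mul_self hC
  obtain ⟨V, rfl⟩ := psd_eq_conj_mul_self hA
  have : (Matrix.of fun p q : ι × κ => (Uᴴ * U) p.1 q.1 * (Vᴴ * V) p.2 q.2)
      = (Matrix.of fun x p : ι × κ => U x.1 p.1 * V x.2 p.2)ᴴ *
        (Matrix.of fun x p : ι × κ => U x.1 p.1 * V x.2 p.2) := by
    ext p q
    simp only [Matrix.mul_apply, Matrix.conjTranspose_apply, Matrix.of_apply,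
      Fintype.sum_prod_type, star_mul']
    rw [Finset.sum_mul_sum]
    exact Finset.sum_congr rfl fun i _ => Finset.sum_congr rfl fun j _ => by ring
  rw [this]
  exact Matrix.posSemidef_conjTranspose_mul_self _

lemma one_sub_psd {A : Matrix ι ι ℂ} (hA : A.PosSemidef) (ht : A.trace = 1) :
    ((1 : Matrix ι ι ℂ) - A).PosSemidef := by
  have h := hA.1
  have hspec := h.spectral_theorem
  simp only [Unitary.conjStarAlgAut_apply] at hspec
  set U : Matrix ι ι ℂ := (h.eigenvectorUnitary : Matrix ι ι ℂ) with hUdef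
  have hU1 : U * star U = 1 := Matrix.mem_unitaryGroup_iff.mp h.eigenvectorUnitary.2
  have hU2 : star U * U = 1 := Matrix.mem_unitaryGroup_iff'.mp h.eigenvectorUnitary.2
  have htr : A.trace = ∑ i, (h.eigenvalues i : ℂ) := by
    conv_lhs => rw [hspec]
    rw [Matrix.trace_mul_cycle, hU2, Matrix.one_mul, Matrix.trace_diagonal]
    simp
  have hsum : ∑ i, h.eigenvalues i = 1 := by
    have : ((∑ i, h.eigenvalues i : ℝ) : ℂ) = 1 := by
      push_cast
      rw [← htr, ht]
    exact_mod_cast this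
  have hev : ∀ i, h.eigenvalues i ≤ 1 := fun i => by
    rw [← hsum]
    exact Finset.single_le_sum (fun j _ => hA.eigenvalues_nonneg j) (Finset.mem_univ i)
  have hkey : (1 : Matrix ι ι ℂ) - A
      = U * Matrix.diagonal (fun i => ((1 - h.eigenvalues i : ℝ) : ℂ)) * star U := by
    have h1 : (1 : Matrix ι ι ℂ) = U * 1 * star U := by rw [Matrix.mul_one, hU1]
    conv_lhs => rw [h1, hspec]
    have h2 : (Matrix.diagonal (fun i => ((1 - h.eigenvalues i : ℝ) : ℂ)))
        = 1 - Matrix.diagonal (RCLike.ofReal ∘ h.eigenvalues) := by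
      ext i j
      rcases eq_or_ne i j with rfl | hij
      · simp only [Matrix.diagonal_apply_eq, Matrix.sub_apply, Matrix.one_apply_eq,
          Function.comp_apply]
        push_cast
        rfl
      · simp [Matrix.diagonal_apply_ne _ hij, Matrix.one_apply_ne hij]
    rw [h2]
    noncomm_ring
  rw [hkey]
  have hdiag : (Matrix.diagonal (fun i => ((1 - h.eigenvalues i : ℝ) : ℂ))).PosSemidef :=
    Matrix.posSemidef_diagonal_iff.mpr fun i => by
      rw [Complex.zero_le_real]
      linarith [hev i]
  have := hdiag.mul_mul_conjTranspose_same U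
  rwa [← Matrix.star_eq_conjTranspose] at this

end Aux

section Aux2

variable {ι κ : Type*} [Fintype ι] [DecidableEq ι] [Fintype κ] [DecidableEq κ]

/-- The measure-and-prepare map `X ↦ Tr(PX)•A + Tr((1-P)X)•B`. -/
noncomputable def prepMap {n : Type*} [Fintype n] [DecidableEq n]
    (P : Matrix n n ℂ) (A B : Matrix ι ι ℂ) : Matrix n n ℂ →ₗ[ℂ] Matrix ι ι ℂ where
  toFun X := ((P * X).trace) • A + (((1 - P) * X).trace) • B
  map_add' X Y := by
    simp only [Matrix.mul_add, Matrix.trace_add, add_smul]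
    abel
  map_smul' c X := by
    simp only [Matrix.mul_smul, Matrix.trace_smul, smul_eq_mul, RingHom.id_apply, smul_add,
      smul_smul]

lemma prepMap_apply {n : Type*} [Fintype n] [DecidableEq n]
    (P : Matrix n n ℂ) (A B : Matrix ι ι ℂ) (X : Matrix n n ℂ) :
    prepMap P A B X = ((P * X).trace) • A + (((1 - P) * X).trace) • B := rfl

lemma prepMap_cp {n : Type*} [Fintype n] [DecidableEq n]
    {P : Matrix n n ℂ} {A B : Matrix ι ι ℂ} (hP : P.PosSemidef)
    (hQ : ((1 : Matrix n n ℂ) - P).PosSemidef) (hA : A.PosSemidef) (hB : B.PosSemidef) :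
    CompletelyPositive (prepMap P A B) := by
  intro k M hM
  have hrw : (Matrix.of fun p q : Fin k × ι =>
      prepMap P A B (Matrix.of fun x y => M (p.1, x) (q.1, y)) p.2 q.2)
    = (Matrix.of fun p q : Fin k × ι =>
        (Matrix.of fun a b : Fin k =>
          (P * Matrix.of fun x y => M (a, x) (b, y)).trace) p.1 q.1 * A p.2 q.2)
      + (Matrix.of fun p q : Fin k × ι =>
        (Matrix.of fun a b : Fin k =>
          ((1 - P) * Matrix.of fun x y => M (a, x) (b, y)).trace) p.1 q.1 * B p.2 q.2) := by
    ext p q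
    simp [prepMap_apply, Matrix.add_apply, Matrix.smul_apply, smul_eq_mul]
  rw [hrw]
  exact (kron_psd (blocktrace_psd hM hP) hA).add (kron_psd (blocktrace_psd hM hQ) hB)

lemma prepMap_tp {n : Type*} [Fintype n] [DecidableEq n]
    (P : Matrix n n ℂ) {A B : Matrix ι ι ℂ} (hA : A.trace = 1) (hB : B.trace = 1) :
    TracePreserving (prepMap P A B) := by
  intro X
  simp only [prepMap_apply, Matrix.trace_add, Matrix.trace_smul, smul_eq_mul, hA, hB,
    Matrix.sub_mul, Matrix.trace_sub, Matrix.one_mul]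
  ring

lemma psiM_conjTranspose (M : ℕ) : (PsiM M)ᴴ = PsiM M := by
  ext i j
  simp [PsiM, Matrix.conjTranspose_apply]

lemma psiM_mul_self {M : ℕ} (hM : M ≠ 0) : PsiM M * PsiM M = PsiM M := by
  have hc : (M : ℂ) ≠ 0 := Nat.cast_ne_zero.mpr hM
  ext i j
  rw [Matrix.mul_apply]
  simp only [PsiM, Matrix.of_apply]
  rw [Finset.sum_const, Finset.card_univ, Fintype.card_fin, nsmul_eq_mul]
  field_simp

lemma psiM_trace {M : ℕ} (hM : M ≠ 0) : (PsiM M).trace = 1 := by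
  have hc : (M : ℂ) ≠ 0 := Nat.cast_ne_zero.mpr hM
  rw [Matrix.trace]
  simp only [Matrix.diag, PsiM, Matrix.of_apply]
  rw [Finset.sum_const, Finset.card_univ, Fintype.card_fin, nsmul_eq_mul]
  field_simp

lemma psiM_psd {M : ℕ} (hM : M ≠ 0) : (PsiM M).PosSemidef := by
  have : PsiM M = (PsiM M)ᴴ * PsiM M := by rw [psiM_conjTranspose, psiM_mul_self hM]
  rw [this]
  exact Matrix.posSemidef_conjTranspose_mul_self _

lemma one_sub_psiM_psd {M : ℕ} (hM : M ≠ 0) : ((1 : Matrix (Fin M) (Fin M) ℂ) - PsiM M).PosSemidef := by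
  have hct : ((1 : Matrix (Fin M) (Fin M) ℂ) - PsiM M)ᴴ = 1 - PsiM M := by
    rw [Matrix.conjTranspose_sub, Matrix.conjTranspose_one, psiM_conjTranspose]
  have hmul : ((1 : Matrix (Fin M) (Fin M) ℂ) - PsiM M) * (1 - PsiM M) = 1 - PsiM M := by
    have hPP := psiM_mul_self hM
    calc ((1 : Matrix (Fin M) (Fin M) ℂ) - PsiM M) * (1 - PsiM M)
        = 1 - PsiM M - PsiM M + PsiM M * PsiM M := by noncomm_ring
      _ = 1 - PsiM M := by rw [hPP]; abel
  have : (1 : Matrix (Fin M) (Fin M) ℂ) - PsiM M = (1 - PsiM M)ᴴ * (1 - PsiM M) := by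
    rw [hct, hmul]
  rw [this]
  exact Matrix.posSemidef_conjTranspose_mul_self _

lemma trace_psiM_mul_diag {M : ℕ} {δ : Matrix (Fin M) (Fin M) ℂ} (hd : δ.IsDiag) :
    (PsiM M * δ).trace = (1 / M : ℂ) * δ.trace := by
  rw [Matrix.trace, Matrix.trace, Finset.mul_sum]
  refine Finset.sum_congr rfl fun i _ => ?_
  rw [Matrix.diag, Matrix.mul_apply]
  rw [Finset.sum_eq_single i (fun j _ hj => by rw [hd hj, mul_zero])
    (fun h => absurd (Finset.mem_univ i) h)]
  simp [PsiM, Matrix.diag]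

open scoped MatrixOrder in
lemma msqrt_eq_sqrt {A : Matrix ι ι ℂ} (hA : A.PosSemidef) : msqrt A = CFC.sqrt A := by
  rw [CFC.sqrt_eq_cfc, cfc_nnreal_eq_real _ A, hA.1.cfc_eq]
  unfold msqrt
  rw [dif_pos hA]
  simp only [Matrix.IsHermitian.cfc, Unitary.conjStarAlgAut_apply]
  congr 3
  ext i
  simp [Real.coe_sqrt, hA.eigenvalues_nonneg]

open scoped MatrixOrder in
lemma fid_self {ρ : Matrix ι ι ℂ} (hρ : IsState ρ) : Fid ρ ρ = 1 := by
  have h1 : msqrt ρ = CFC.sqrt ρ := msqrt_eq_sqrt hρ.1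
  have h2 : msqrt ρ * ρ * msqrt ρ = ρ ^ 2 := by
    have hss := CFC.sqrt_mul_sqrt_self ρ hρ.1.nonneg
    rw [h1, pow_two]
    calc CFC.sqrt ρ * ρ * CFC.sqrt ρ = CFC.sqrt ρ * (CFC.sqrt ρ * CFC.sqrt ρ) * CFC.sqrt ρ := by
          rw [hss]
      _ = (CFC.sqrt ρ * CFC.sqrt ρ) * (CFC.sqrt ρ * CFC.sqrt ρ) := by noncomm_ring
      _ = ρ * ρ := by rw [hss]
  have h3 : msqrt (ρ ^ 2) = ρ := by
    rw [msqrt_eq_sqrt (hρ.1.pow 2)]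
    exact CFC.sqrt_sq ρ hρ.1.nonneg
  unfold Fid
  rw [h2, h3, hρ.2]
  norm_num

end Aux2

/-- upper bound of Theorem 4: `C_MIO^ε(ρ) ≤ C_max^ε(ρ) + 1`. -/
theorem CMIOeps_le_Cmaxeps_add_one {d : ℕ} (ρ : Matrix (Fin d) (Fin d) ℂ) (hρ : IsState ρ)
    (ε : ℝ) (hε : 0 ≤ ε) :
    CMIOeps ρ ε ≤ Cmaxeps ρ ε + 1 := by
  have hd : d ≠ 0 := by
    rintro rfl
    have h0 : ρ.trace = 0 := by simp [Matrix.trace]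
    rw [hρ.2] at h0
    exact one_ne_zero h0
  have hdc : (d : ℂ) ≠ 0 := Nat.cast_ne_zero.mpr hd
  have hSne : { r | ∃ ρ', IsState ρ' ∧ 1 - ε ≤ Fid ρ ρ' ∧ r = Cmax ρ' }.Nonempty :=
    ⟨Cmax ρ, ρ, hρ, by rw [fid_self hρ]; linarith, rfl⟩
  have key : ∀ r ∈ { r | ∃ ρ', IsState ρ' ∧ 1 - ε ≤ Fid ρ ρ' ∧ r = Cmax ρ' },
      CMIOeps ρ ε ≤ r + 1 := by
    rintro r ⟨ρ', hρ', hF, rfl⟩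
    set L := {l : ℝ | 0 ≤ l ∧ ∃ δ, IsIncoherent δ ∧ (l • δ - ρ').PosSemidef} with hLdef
    have hLne : L.Nonempty := by
      refine ⟨(d : ℝ), (by positivity), Matrix.diagonal (fun _ => (d : ℂ)⁻¹), ?_, ?_⟩
      · have hnn : (0 : ℂ) ≤ (d : ℂ)⁻¹ := by
          have hcast : ((d : ℂ))⁻¹ = (((d : ℝ)⁻¹ : ℝ) : ℂ) := by push_cast; ring
          rw [hcast, Complex.zero_le_real]
          positivity
        refine ⟨⟨Matrix.posSemidef_diagonal_iff.mpr fun _ => hnn, ?_⟩, Matrix.isDiag_diagonal _⟩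
        rw [Matrix.trace_diagonal]
        rw [Finset.sum_const, Finset.card_univ, Fintype.card_fin, nsmul_eq_mul]
        field_simp
      · have hone : (d : ℝ) • Matrix.diagonal (fun _ : Fin d => (d : ℂ)⁻¹)
            = (1 : Matrix (Fin d) (Fin d) ℂ) := by
          rw [realSmul_mat]
          ext i j
          rcases eq_or_ne i j with rfl | hij
          · simp [Matrix.smul_apply, Matrix.diagonal_apply_eq, Matrix.one_apply_eq,
              smul_eq_mul, mul_inv_cancel₀ hdc]
          · simp [Matrix.smul_apply, Matrix.diagonal_apply_ne _ hij, Matrix.one_apply_ne hij]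
        rw [hone]
        exact one_sub_psd hρ'.1 hρ'.2
    have hL1 : ∀ l ∈ L, 1 ≤ l := by
      rintro l ⟨hl0, δ, hδinc, hpsd⟩
      have h := trace_psd hpsd
      rw [Matrix.trace_sub, realSmul_mat, Matrix.trace_smul, hδinc.1.2, hρ'.2,
        smul_eq_mul, mul_one] at h
      have hcast : ((l - 1 : ℝ) : ℂ) = (l : ℂ) - 1 := by push_cast; ring
      rw [← hcast, Complex.zero_le_real] at h
      linarith
    have hlam1 : (1 : ℝ) ≤ sInf L := le_csInf hLne hL1
    set lam := sInf L with hlamdef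
    obtain ⟨M, hM2, hlamM, hMle⟩ : ∃ M : ℕ, 2 ≤ M ∧ lam < (M : ℝ) ∧ (M : ℝ) ≤ 2 * lam := by
      refine ⟨⌊lam⌋₊ + 1, ?_, ?_, ?_⟩
      · have : 1 ≤ ⌊lam⌋₊ := Nat.le_floor (by exact_mod_cast hlam1)
        omega
      · push_cast
        exact Nat.lt_floor_add_one lam
      · have hfl := Nat.floor_le (le_trans zero_le_one hlam1)
        push_cast
        linarith
    have hMne : M ≠ 0 := by omega
    have hMc : (M : ℂ) ≠ 0 := Nat.cast_ne_zero.mpr hMne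
    have hMc1 : (M : ℂ) - 1 ≠ 0 := by
      rw [sub_ne_zero]
      exact_mod_cast (by omega : M ≠ 1)
    have hMR1 : (0 : ℝ) < (M : ℝ) - 1 := by
      have : (2 : ℝ) ≤ (M : ℝ) := by exact_mod_cast hM2
      linarith
    obtain ⟨l, hlL, hlM⟩ := exists_lt_of_csInf_lt hLne hlamM
    obtain ⟨hl0, δ, hδinc, hlpsd⟩ := hlL
    have hδpsd : δ.PosSemidef := hδinc.1.1
    have hMδ : ((M : ℝ) • δ - ρ').PosSemidef := by
      have hid : (M : ℝ) • δ - ρ' = (l • δ - ρ') + ((M : ℝ) - l) • δ := by module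
      rw [hid, realSmul_mat ((M : ℝ) - l) δ]
      refine hlpsd.add (smul_psd ?_ hδpsd)
      rw [Complex.zero_le_real]
      linarith
    set τ : Matrix (Fin d) (Fin d) ℂ := (((M : ℝ) - 1)⁻¹ : ℝ) • ((M : ℝ) • δ - ρ') with hτ
    have hτpsd : τ.PosSemidef := by
      rw [hτ, realSmul_mat]
      refine smul_psd ?_ hMδ
      rw [Complex.zero_le_real]
      positivity
    have hδtr : δ.trace = 1 := hδinc.1.2
    have hτtr : τ.trace = 1 := by
      rw [hτ, realSmul_mat, Matrix.trace_smul, Matrix.trace_sub, realSmul_mat,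
        Matrix.trace_smul, hδtr, hρ'.2, smul_eq_mul, smul_eq_mul, mul_one]
      have hne : ((M : ℝ) - 1 : ℝ) ≠ 0 := ne_of_gt hMR1
      push_cast
      field_simp
    set Λ := prepMap (PsiM M) ρ' τ with hΛ
    have hMIO : IsMIO Λ := by
      refine ⟨prepMap_cp (psiM_psd hMne) (one_sub_psiM_psd hMne) hρ'.1 hτpsd,
        prepMap_tp _ hρ'.2 hτtr, ?_⟩
      intro δ' hδ'
      have h1 : (PsiM M * δ').trace = (1 / M : ℂ) := by
        rw [trace_psiM_mul_diag hδ'.2, hδ'.1.2, mul_one]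
      have h2 : (((1 : Matrix (Fin M) (Fin M) ℂ) - PsiM M) * δ').trace = 1 - (1 / M : ℂ) := by
        rw [Matrix.sub_mul, Matrix.trace_sub, Matrix.one_mul, hδ'.1.2, h1]
      have hout : Λ δ' = δ := by
        rw [hΛ, prepMap_apply, h1, h2, hτ, realSmul_mat, realSmul_mat, smul_smul]
        have hc : (1 - (1 / M : ℂ)) * ((((M : ℝ) - 1)⁻¹ : ℝ) : ℂ) = 1 / (M : ℂ) := by
          push_cast
          field_simp
        have hcast2 : (((M : ℝ) : ℂ)) = (M : ℂ) := by push_cast; ring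
        rw [hc, hcast2, smul_sub, smul_smul, one_div_mul_cancel hMc, one_smul]
        abel
      rw [hout]
      exact hδinc
    have hΛΨ : Λ (PsiM M) = ρ' := by
      rw [hΛ, prepMap_apply, Matrix.sub_mul, Matrix.one_mul, Matrix.trace_sub,
        psiM_mul_self hMne, psiM_trace hMne]
      simp
    have hbdd : BddBelow { r | ∃ M : ℕ, 1 ≤ M ∧ r = Real.logb 2 M ∧
        ∃ Λ : Matrix (Fin M) (Fin M) ℂ →ₗ[ℂ] Matrix (Fin d) (Fin d) ℂ,
          IsMIO Λ ∧ 1 - ε ≤ Fid ρ (Λ (PsiM M)) } := by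
      refine ⟨0, fun r hr => ?_⟩
      obtain ⟨M', hM', hrr, _⟩ := hr
      rw [hrr]
      exact Real.logb_nonneg one_lt_two (by exact_mod_cast hM')
    have hmem : Real.logb 2 M ∈ { r | ∃ M : ℕ, 1 ≤ M ∧ r = Real.logb 2 M ∧
        ∃ Λ : Matrix (Fin M) (Fin M) ℂ →ₗ[ℂ] Matrix (Fin d) (Fin d) ℂ,
          IsMIO Λ ∧ 1 - ε ≤ Fid ρ (Λ (PsiM M)) } :=
      ⟨M, by omega, rfl, Λ, hMIO, by rw [hΛΨ]; exact hF⟩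
    have hle : CMIOeps ρ ε ≤ Real.logb 2 M := csInf_le hbdd hmem
    have hlam0 : (0 : ℝ) < lam := lt_of_lt_of_le one_pos hlam1
    have hCmax : Cmax ρ' = Real.logb 2 lam := rfl
    have hlogb : Real.logb 2 M ≤ Real.logb 2 lam + 1 := by
      calc Real.logb 2 M ≤ Real.logb 2 (2 * lam) :=
            Real.logb_le_logb_of_le one_lt_two (by positivity) hMle
        _ = 1 + Real.logb 2 lam := by
            rw [Real.logb_mul two_ne_zero (ne_of_gt hlam0),
              Real.logb_self_eq_one one_lt_two]
        _ = Real.logb 2 lam + 1 := by ring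
    rw [hCmax]
    linarith
  have hfinal : CMIOeps ρ ε - 1 ≤ Cmaxeps ρ ε :=
    le_csInf hSne fun b hb => by linarith [key b hb]
  linarith

end OneShot
end

section
/- Theorem 6: for every state ρ and every ε ≥ 0, the one-shot coherence cost under incoherent operations and under strictly incoherent operations both equal the smoothed monotone C_0: C_IO^ε(ρ) = C_SIO^ε(ρ) = C_0^ε(ρ). -/
open scoped Matrix ComplexOrder

namespace OneShot

variable {ι κ : Type*} [Fintype ι] [DecidableEq ι] [Fintype κ] [DecidableEq κ]

/-! ### Auxiliary lemmas for Theorem 6 -/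

section AuxTheorem6

set_option linter.unusedSectionVars false

open Matrix Finset

/-- Entry of `outer`. -/
lemma outer_apply' (ψ : ι → ℂ) (i j : ι) : outer ψ i j = ψ i * star (ψ j) := rfl

lemma outer_zero : outer (0 : ι → ℂ) = 0 := by
  ext i j; simp [outer_apply']

lemma outer_posSemidef (v : ι → ℂ) : (outer v).PosSemidef := by
  refine Matrix.PosSemidef.of_dotProduct_mulVec_nonneg ?_ ?_
  · ext i j
    simp only [Matrix.conjTranspose_apply, outer_apply', star_mul', star_star]
    ring
  · intro x
    have lhs_eq : star x ⬝ᵥ (outer v).mulVec x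
        = ∑ i, ∑ j, star (x i) * (v i * star (v j) * x j) := by
      simp only [dotProduct, Matrix.mulVec, outer_apply', Pi.star_apply]
      exact Finset.sum_congr rfl fun i _ => Finset.mul_sum _ _ _
    have rhs_eq : star (∑ j, star (v j) * x j) * (∑ j, star (v j) * x j)
        = ∑ i, ∑ j, star (x i) * (v i * star (v j) * x j) := by
      rw [star_sum, Finset.sum_mul_sum]
      refine Finset.sum_congr rfl fun i _ => Finset.sum_congr rfl fun j _ => ?_
      simp only [star_mul', star_star]; ring
    rw [lhs_eq, ← rhs_eq]
    exact star_mul_self_nonneg _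

lemma trace_outer (v : ι → ℂ) : (outer v).trace = ((∑ i, Complex.normSq (v i) : ℝ) : ℂ) := by
  simp only [Matrix.trace, Matrix.diag, outer_apply']
  push_cast
  refine Finset.sum_congr rfl fun i _ => ?_
  rw [Complex.star_def, Complex.mul_conj]

lemma outer_conj (K : Matrix κ ι ℂ) (v : ι → ℂ) :
    K * outer v * Kᴴ = outer (K.mulVec v) := by
  ext p q
  simp only [Matrix.mul_apply, Matrix.conjTranspose_apply, outer_apply', Matrix.mulVec,
    dotProduct, star_sum, star_mul', star_star, Finset.mul_sum]
  refine Finset.sum_congr rfl fun j _ => ?_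
  rw [Finset.sum_mul, Finset.sum_mul]
  exact Finset.sum_congr rfl fun i _ => by ring

lemma outer_smul (c : ℂ) (v : ι → ℂ) : outer (c • v) = (c * star c) • outer v := by
  ext i j
  simp only [outer_apply', Pi.smul_apply, smul_eq_mul, Matrix.smul_apply, star_mul']
  ring

/-- Sum over an enumerated finset. -/
lemma sum_orderEmbOfFin {α : Type*} [LinearOrder α] (s : Finset α) {β : Type*}
    [AddCommMonoid β] (f : α → β) :
    ∑ j : Fin s.card, f (s.orderEmbOfFin rfl j) = ∑ a ∈ s, f a := by
  classical
  have himg : Finset.univ.image (fun j => s.orderEmbOfFin rfl j) = s := by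
    ext a
    simp only [Finset.mem_image, Finset.mem_univ, true_and]
    constructor
    · rintro ⟨j, rfl⟩; exact Finset.orderEmbOfFin_mem s rfl j
    · intro ha
      have : a ∈ Set.range (s.orderEmbOfFin rfl) := by
        rw [Finset.range_orderEmbOfFin]; exact ha
      obtain ⟨j, hj⟩ := this
      exact ⟨j, hj⟩
  have key : ∑ a ∈ Finset.univ.image (fun j => s.orderEmbOfFin rfl j), f a
      = ∑ j : Fin s.card, f (s.orderEmbOfFin rfl j) :=
    Finset.sum_image (fun x _ y _ h => (s.orderEmbOfFin rfl).injective h)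
  rw [himg] at key
  exact key.symm

/-- Truncated sums over `Fin M`. -/
lemma sum_truncExt {M k : ℕ} (hk : k ≤ M) {β : Type*} [AddCommMonoid β] (F : Fin M → β)
    (hF : ∀ i : Fin M, ¬((i : ℕ) < k) → F i = 0) :
    ∑ i : Fin M, F i = ∑ j : Fin k, F (Fin.castLE hk j) := by
  classical
  have h2 : ∑ i ∈ Finset.univ.map (Fin.castLEEmb hk), F i
      = ∑ j : Fin k, F (Fin.castLE hk j) := by
    rw [Finset.sum_map]
    rfl
  rw [← h2]
  refine (Finset.sum_subset (Finset.subset_univ _) fun i _ hi => ?_).symm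
  refine hF i fun hlt => hi ?_
  simp only [Finset.mem_map, Finset.mem_univ, true_and, Fin.castLEEmb]
  exact ⟨⟨(i : ℕ), hlt⟩, by ext; simp⟩

lemma posSemidef_sum {N : ℕ} (f : Fin N → Matrix ι ι ℂ) (hf : ∀ n, (f n).PosSemidef) :
    (∑ n, f n).PosSemidef := by
  classical
  induction N with
  | zero => simpa using Matrix.PosSemidef.zero
  | succ m ih =>
      rw [Fin.sum_univ_succ]
      exact ((hf 0).add (ih _ fun n => hf n.succ))

lemma posSemidef_ofReal_smul {r : ℝ} (hr : 0 ≤ r) {A : Matrix ι ι ℂ} (hA : A.PosSemidef) :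
    (((r : ℂ)) • A).PosSemidef := by
  refine Matrix.PosSemidef.of_dotProduct_mulVec_nonneg ?_ ?_
  · have := hA.1
    rw [Matrix.IsHermitian, Matrix.conjTranspose_smul, this, Complex.star_def,
      Complex.conj_ofReal]
  · intro x
    rw [Matrix.smul_mulVec, dotProduct_smul]
    have h1 : (0 : ℂ) ≤ (r : ℂ) := by
      rw [Complex.le_def]; simp [hr]
    have h2 := hA.dotProduct_mulVec_nonneg x
    calc (0:ℂ) = (r:ℂ) • 0 := by simp
    _ ≤ (r:ℂ) • (star x ⬝ᵥ A.mulVec x) := by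
        rw [smul_eq_mul, smul_eq_mul, mul_zero]
        exact mul_nonneg h1 h2

lemma realSmul_eq (r : ℝ) (A : Matrix ι ι ℂ) : r • A = ((r : ℂ)) • A := by
  ext i j
  simp [Matrix.smul_apply, Complex.real_smul]

lemma isState_of_decomposition {ρ : Matrix ι ι ℂ} {n : ℕ} {p : Fin n → ℝ}
    {ψ : Fin n → ι → ℂ} (h : IsDecomposition ρ n p ψ) : IsState ρ := by
  obtain ⟨hp, hsum, hnorm, hrep⟩ := h
  constructor
  · rw [hrep]
    refine posSemidef_sum _ fun j => ?_
    rw [realSmul_eq]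
    exact posSemidef_ofReal_smul (hp j).le (outer_posSemidef _)
  · rw [hrep, Matrix.trace_sum]
    have : ∀ j, (p j • outer (ψ j)).trace = ((p j : ℝ) : ℂ) := by
      intro j
      rw [realSmul_eq, Matrix.trace_smul, trace_outer, hnorm j, smul_eq_mul]
      simp
    rw [Finset.sum_congr rfl fun j _ => this j]
    rw [← Complex.ofReal_sum, hsum, Complex.ofReal_one]

lemma nonempty_of_isState {ρ : Matrix ι ι ℂ} (h : IsState ρ) : Nonempty ι := by
  by_contra hne
  have : IsEmpty ι := not_nonempty_iff.mp hne
  have := h.2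
  rw [Matrix.trace] at this
  simp [Finset.univ_eq_empty] at this

end AuxTheorem6

section AuxTheorem6b

set_option linter.unusedSectionVars false
set_option maxHeartbeats 1000000

open Matrix Finset

/-- Column-incoherence: every column has at most one nonzero entry. -/
def ColInc {α β : Type*} (K : Matrix α β ℂ) : Prop :=
  ∀ (j : β) (p q : α), K p j ≠ 0 → K q j ≠ 0 → p = q

/-- Row-incoherence: every row has at most one nonzero entry. -/
def RowInc {α β : Type*} (K : Matrix α β ℂ) : Prop :=
  ∀ (p : α) (i j : β), K p i ≠ 0 → K p j ≠ 0 → i = j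

lemma colInc_conjTranspose {K : Matrix κ ι ℂ} (h : RowInc K) : ColInc Kᴴ := by
  intro j p q hp hq
  simp only [Matrix.conjTranspose_apply, ne_eq, star_eq_zero] at hp hq
  exact h j p q hp hq

lemma colInc_smul {K : Matrix κ ι ℂ} (c : ℂ) (h : ColInc K) : ColInc (c • K) := by
  intro j p q hp hq
  simp only [Matrix.smul_apply, smul_eq_mul, ne_eq, mul_eq_zero, not_or] at hp hq
  exact h j p q hp.2 hq.2

lemma rowInc_smul {K : Matrix κ ι ℂ} (c : ℂ) (h : RowInc K) : RowInc (c • K) := by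
  intro p i j hp hq
  simp only [Matrix.smul_apply, smul_eq_mul, ne_eq, mul_eq_zero, not_or] at hp hq
  exact h p i j hp.2 hq.2

lemma isIncoherent_basis (i : ι) : IsIncoherent (Matrix.diagonal (Pi.single i (1 : ℂ))) := by
  refine ⟨⟨Matrix.PosSemidef.diagonal fun j => ?_, ?_⟩, Matrix.isDiag_diagonal _⟩
  · rcases eq_or_ne j i with h | h
    · subst h
      rw [Pi.single_eq_same]
      exact zero_le_one
    · simp [Pi.single_eq_of_ne h]
  · rw [Matrix.trace_diagonal]
    simp

lemma conj_diag_apply (K : Matrix κ ι ℂ) (g : ι → ℂ) (p q : κ) :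
    (K * Matrix.diagonal g * Kᴴ) p q = ∑ i, K p i * g i * star (K q i) := by
  simp [Matrix.mul_apply, Matrix.conjTranspose_apply, Matrix.diagonal_apply, mul_ite, mul_zero,
    ite_mul, zero_mul, Finset.sum_ite_eq', Finset.sum_ite_eq]

lemma psd_diag_nonneg {A : Matrix ι ι ℂ} (hA : A.PosSemidef) (p : ι) : 0 ≤ A p p := by
  have h := hA.dotProduct_mulVec_nonneg (Pi.single p 1)
  simpa [Matrix.mulVec_single, dotProduct, Pi.single_apply] using h

lemma colInc_incoherentPreserving [Nonempty κ] {K : Matrix κ ι ℂ} (h : ColInc K) :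
    IncoherentPreserving K := by
  classical
  intro δ hδ
  obtain ⟨⟨hPSD, htr⟩, hdiag⟩ := hδ
  have hdg : Matrix.diagonal δ.diag = δ := hdiag.diagonal_diag
  have hDPSD : (K * δ * Kᴴ).PosSemidef := hPSD.mul_mul_conjTranspose_same K
  have hentry : ∀ p q, (K * δ * Kᴴ) p q = ∑ i, K p i * δ i i * star (K q i) := by
    intro p q
    conv_lhs => rw [← hdg]
    rw [conj_diag_apply]
    rfl
  have hDdiag : (K * δ * Kᴴ).IsDiag := by
    intro p q hpq
    rw [hentry]
    refine Finset.sum_eq_zero fun i _ => ?_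
    by_cases h1 : K p i = 0
    · simp [h1]
    by_cases h2 : K q i = 0
    · simp [h2]
    exact absurd (h i p q h1 h2) hpq
  have hdnn : ∀ p, 0 ≤ (K * δ * Kᴴ) p p := fun p => psd_diag_nonneg hDPSD p
  have hre : ∀ p, ((K * δ * Kᴴ) p p) = (((K * δ * Kᴴ) p p).re : ℂ) := by
    intro p
    have := hdnn p
    rw [Complex.le_def] at this
    simp only [Complex.zero_re, Complex.zero_im] at this
    exact (Complex.ext_iff.mpr ⟨rfl, by simp [← this.2]⟩)
  have hrenn : ∀ p, 0 ≤ ((K * δ * Kᴴ) p p).re := by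
    intro p
    have := hdnn p
    rw [Complex.le_def] at this
    simpa using this.1
  set c : ℝ := ∑ p, ((K * δ * Kᴴ) p p).re with hc
  have hc0 : 0 ≤ c := Finset.sum_nonneg fun p _ => hrenn p
  have htrc : (K * δ * Kᴴ).trace = (c : ℂ) := by
    rw [Matrix.trace, hc]
    push_cast
    exact Finset.sum_congr rfl fun p _ => hre p
  by_cases hcz : c = 0
  · have hD0 : K * δ * Kᴴ = 0 := by
      have hall : ∀ p ∈ Finset.univ, ((K * δ * Kᴴ) p p).re = 0 :=
        (Finset.sum_eq_zero_iff_of_nonneg fun p _ => hrenn p).mp (hc ▸ hcz)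
      ext p q
      rcases eq_or_ne p q with rfl | hpq
      · rw [hre p, hall p (Finset.mem_univ p)]
        simp
      · simpa using hDdiag hpq
    exact ⟨0, le_refl 0, Matrix.diagonal (Pi.single (Classical.arbitrary κ) 1),
      isIncoherent_basis _, by simp [hD0]⟩
  · have hcpos : 0 < c := lt_of_le_of_ne hc0 (Ne.symm hcz)
    refine ⟨c, hc0, ((c⁻¹ : ℝ) : ℂ) • (K * δ * Kᴴ), ⟨⟨posSemidef_ofReal_smul (by positivity) hDPSD, ?_⟩, ?_⟩, ?_⟩
    · rw [Matrix.trace_smul, htrc, smul_eq_mul, ← Complex.ofReal_mul,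
        inv_mul_cancel₀ hcz, Complex.ofReal_one]
    · intro p q hpq
      simp [Matrix.smul_apply, hDdiag hpq]
    · rw [smul_smul, ← Complex.ofReal_mul, mul_inv_cancel₀ hcz, Complex.ofReal_one, one_smul]

lemma incoherentPreserving_colInc {K : Matrix κ ι ℂ} (h : IncoherentPreserving K) :
    ColInc K := by
  intro i p q hp hq
  by_contra hpq
  obtain ⟨c, hc, δ', hδ', heq⟩ := h _ (isIncoherent_basis i)
  have hL : (K * Matrix.diagonal (Pi.single i (1:ℂ)) * Kᴴ) p q = K p i * star (K q i) := by
    rw [conj_diag_apply]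
    rw [Finset.sum_eq_single i]
    · simp
    · intro j _ hj
      simp [Pi.single_eq_of_ne hj]
    · intro hmem
      exact absurd (Finset.mem_univ i) hmem
  have hR : ((c : ℂ) • δ') p q = 0 := by
    simp [Matrix.smul_apply, hδ'.2 hpq]
  rw [heq, hR] at hL
  rcases mul_eq_zero.mp hL.symm with h1 | h2
  · exact hp h1
  · exact hq (star_eq_zero.mp h2)

lemma T_smul {c : ℂ} (hc : c ≠ 0) (v : ι → ℂ) : T (c • v) = T v := by
  unfold T
  apply congr_arg Finset.card
  ext i
  simp [hc]

lemma one_le_T {v : ι → ℂ} (h : ∑ i, Complex.normSq (v i) = 1) : 1 ≤ T v := by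
  have hex : ∃ i, v i ≠ 0 := by
    by_contra hno
    push_neg at hno
    rw [Finset.sum_eq_zero (fun i _ => by simp [hno i])] at h
    norm_num at h
  obtain ⟨i, hi⟩ := hex
  exact Finset.card_pos.mpr ⟨i, Finset.mem_filter.mpr ⟨Finset.mem_univ i, hi⟩⟩

lemma T_mulVec_le [Nonempty ι] (K : Matrix κ ι ℂ) (h : ColInc K) (v : ι → ℂ) :
    T (K.mulVec v) ≤ Fintype.card ι := by
  classical
  have key : (Finset.univ.filter fun p => K.mulVec v p ≠ 0).card ≤ (Finset.univ : Finset ι).card := by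
    apply Finset.card_le_card_of_injOn
      (fun p => if hp : ∃ i, K p i ≠ 0 then hp.choose else Classical.arbitrary ι)
    · intro a _; exact Finset.mem_coe.mpr (Finset.mem_univ _)
    · intro p hp' q hq' hfeq
      have hex : ∀ r ∈ Finset.univ.filter fun p => K.mulVec v p ≠ 0, ∃ i, K r i ≠ 0 := by
        intro r hr
        by_contra hno
        push_neg at hno
        have : K.mulVec v r = 0 := by
          simp only [Matrix.mulVec, dotProduct]
          exact Finset.sum_eq_zero fun i _ => by simp [hno i]
        exact (Finset.mem_filter.mp hr).2 this
      have hpex := hex p (by simpa using hp')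
      have hqex := hex q (by simpa using hq')
      have hfeq' : (if hp : ∃ i, K p i ≠ 0 then hp.choose else Classical.arbitrary ι)
          = (if hq : ∃ i, K q i ≠ 0 then hq.choose else Classical.arbitrary ι) := hfeq
      rw [dif_pos hpex, dif_pos hqex] at hfeq'
      exact h hpex.choose p q hpex.choose_spec (hfeq' ▸ hqex.choose_spec)
  simpa [T, Finset.card_univ] using key

/-- The linear map given by Kraus operators. -/
noncomputable def krausChannel {N : ℕ} (K : Fin N → Matrix κ ι ℂ) :
    Matrix ι ι ℂ →ₗ[ℂ] Matrix κ κ ℂ where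
  toFun A := ∑ n, K n * A * (K n)ᴴ
  map_add' A B := by
    simp [Matrix.mul_add, Matrix.add_mul, Finset.sum_add_distrib]
  map_smul' c A := by
    simp [Matrix.mul_smul, Matrix.smul_mul, Finset.smul_sum]

lemma krausChannel_apply {N : ℕ} (K : Fin N → Matrix κ ι ℂ) (A : Matrix ι ι ℂ) :
    krausChannel K A = ∑ n, K n * A * (K n)ᴴ := rfl

lemma trace_kraus {N : ℕ} (K : Fin N → Matrix κ ι ℂ) (hK : ∑ n, (K n)ᴴ * K n = 1)
    (A : Matrix ι ι ℂ) : (∑ n, K n * A * (K n)ᴴ).trace = A.trace := by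
  calc (∑ n, K n * A * (K n)ᴴ).trace = ∑ n, (K n * A * (K n)ᴴ).trace := Matrix.trace_sum _ _
    _ = ∑ n, ((K n)ᴴ * K n * A).trace :=
        Finset.sum_congr rfl fun n _ => Matrix.trace_mul_cycle _ _ _
    _ = (∑ n, (K n)ᴴ * K n * A).trace := (Matrix.trace_sum _ _).symm
    _ = ((∑ n, (K n)ᴴ * K n) * A).trace := by rw [Finset.sum_mul]
    _ = A.trace := by rw [hK, one_mul]

lemma PsiM_eq_outer {M : ℕ} (hM : 0 < M) :
    PsiM M = outer (fun _ : Fin M => (((Real.sqrt M)⁻¹ : ℝ) : ℂ)) := by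
  have hs : ((Real.sqrt M)⁻¹ * (Real.sqrt M)⁻¹ : ℝ) = (M : ℝ)⁻¹ := by
    rw [← mul_inv, Real.mul_self_sqrt (by positivity)]
  ext i j
  rw [PsiM, outer_apply']
  simp only [Matrix.of_apply, Complex.star_def, Complex.conj_ofReal]
  rw [← Complex.ofReal_mul, hs]
  push_cast
  rw [one_div]

lemma trace_PsiM {M : ℕ} (hM : 0 < M) : (PsiM M).trace = 1 := by
  simp only [Matrix.trace, Matrix.diag, PsiM, Matrix.of_apply, Finset.sum_const,
    Finset.card_univ, Fintype.card_fin, nsmul_eq_mul]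
  rw [mul_one_div, div_self]
  exact_mod_cast hM.ne'

end AuxTheorem6b

section AuxTheorem6c

set_option linter.unusedSectionVars false
set_option maxHeartbeats 1000000

open Matrix Finset

lemma decomp_of_vectors {ρ : Matrix ι ι ℂ} {N : ℕ} (x : Fin N → ι → ℂ)
    (hρ : ρ = ∑ n, outer (x n)) (htr : ∑ n, ∑ i, Complex.normSq (x n i) = 1)
    (M : ℕ) (hT : ∀ n, T (x n) ≤ M) :
    ∃ n' p ψ, IsDecomposition ρ n' p ψ ∧ ((Finset.univ.sup fun j => T (ψ j)) ≤ M) := by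
  classical
  set w : Fin N → ℝ := fun n => ∑ i, Complex.normSq (x n i) with hw
  have hw0 : ∀ n, 0 ≤ w n := fun n => Finset.sum_nonneg fun i _ => Complex.normSq_nonneg _
  have hxz : ∀ n, w n = 0 → x n = 0 := by
    intro n hn
    funext i
    have := (Finset.sum_eq_zero_iff_of_nonneg
      (fun i _ => Complex.normSq_nonneg (x n i))).mp hn i (Finset.mem_univ i)
    exact Complex.normSq_eq_zero.mp this
  set S := Finset.univ.filter (fun n => w n ≠ 0) with hS
  have hmem : ∀ j : Fin S.card, w (S.orderEmbOfFin rfl j) ≠ 0 := by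
    intro j
    have h1 := Finset.orderEmbOfFin_mem S rfl j
    exact (Finset.mem_filter.mp h1).2
  have hwpos : ∀ j, 0 < w (S.orderEmbOfFin rfl j) :=
    fun j => lt_of_le_of_ne (hw0 _) (Ne.symm (hmem j))
  refine ⟨S.card, fun j => w (S.orderEmbOfFin rfl j),
    fun j => (((Real.sqrt (w (S.orderEmbOfFin rfl j)))⁻¹ : ℝ) : ℂ) • x (S.orderEmbOfFin rfl j),
    ⟨hwpos, ?_, ?_, ?_⟩, ?_⟩
  · rw [sum_orderEmbOfFin S w, hS, Finset.sum_filter_ne_zero]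
    exact htr
  · intro j
    have key : ∀ i, Complex.normSq ((((Real.sqrt (w (S.orderEmbOfFin rfl j)))⁻¹ : ℝ) : ℂ)
        * x (S.orderEmbOfFin rfl j) i)
        = (w (S.orderEmbOfFin rfl j))⁻¹ * Complex.normSq (x (S.orderEmbOfFin rfl j) i) := by
      intro i
      rw [Complex.normSq_mul, Complex.normSq_ofReal, ← mul_inv,
        Real.mul_self_sqrt (hw0 _)]
    simp only [Pi.smul_apply, smul_eq_mul]
    rw [Finset.sum_congr rfl fun i _ => key i, ← Finset.mul_sum]
    exact inv_mul_cancel₀ (hmem j)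
  · rw [hρ]
    have h1 : ∑ n, outer (x n) = ∑ n ∈ S, outer (x n) := by
      symm
      rw [hS]
      apply Finset.sum_filter_of_ne
      intro n _ hne hwz
      exact hne (by rw [hxz n hwz, outer_zero])
    rw [h1, ← sum_orderEmbOfFin S (fun n => outer (x n))]
    refine Finset.sum_congr rfl fun j _ => ?_
    rw [outer_smul, realSmul_eq, smul_smul]
    have hcoef : ((w (S.orderEmbOfFin rfl j) : ℝ) : ℂ) *
        (((((Real.sqrt (w (S.orderEmbOfFin rfl j)))⁻¹ : ℝ)) : ℂ) *
          star (((((Real.sqrt (w (S.orderEmbOfFin rfl j)))⁻¹ : ℝ)) : ℂ))) = 1 := by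
      rw [Complex.star_def, Complex.conj_ofReal, ← Complex.ofReal_mul, ← Complex.ofReal_mul,
        ← mul_inv, Real.mul_self_sqrt (hw0 _), mul_inv_cancel₀ (hmem j), Complex.ofReal_one]
    rw [hcoef, one_smul]
  · refine Finset.sup_le fun j _ => ?_
    have hc : ((((Real.sqrt (w (S.orderEmbOfFin rfl j)))⁻¹ : ℝ)) : ℂ) ≠ 0 := by
      have : Real.sqrt (w (S.orderEmbOfFin rfl j)) > 0 := Real.sqrt_pos.mpr (hwpos j)
      simp only [ne_eq, Complex.ofReal_eq_zero, inv_eq_zero]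
      exact this.ne'
    rw [T_smul hc]
    exact hT _

lemma conj_unitary_diag (U : Matrix ι ι ℂ) (g : ι → ℂ) :
    U * Matrix.diagonal g * Uᴴ = ∑ i, g i • outer (fun p => U p i) := by
  ext p q
  rw [conj_diag_apply]
  rw [Matrix.sum_apply]
  refine Finset.sum_congr rfl fun i _ => ?_
  simp only [Matrix.smul_apply, outer_apply', smul_eq_mul]
  ring

lemma exists_state_decomposition {ρ : Matrix ι ι ℂ} (h : IsState ρ) :
    ∃ n p ψ, IsDecomposition ρ n p ψ := by
  classical
  obtain ⟨hPSD, htr⟩ := h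
  have hH := hPSD.1
  set U : Matrix ι ι ℂ := (hH.eigenvectorUnitary : Matrix ι ι ℂ) with hU
  set lam := hH.eigenvalues with hlam
  have hUU : Uᴴ * U = 1 := by
    rw [hU, ← Matrix.star_eq_conjTranspose]
    exact Matrix.mem_unitaryGroup_iff'.mp (hH.eigenvectorUnitary).2
  have hcol : ∀ i, ∑ p, Complex.normSq (U p i) = 1 := by
    intro i
    have h1 : (Uᴴ * U) i i = 1 := by rw [hUU, Matrix.one_apply_eq]
    have h2 : (Uᴴ * U) i i = ((∑ p, Complex.normSq (U p i) : ℝ) : ℂ) := by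
      rw [Matrix.mul_apply]
      push_cast
      refine Finset.sum_congr rfl fun p _ => ?_
      rw [Matrix.conjTranspose_apply, Complex.star_def, mul_comm, Complex.mul_conj]
    rw [h2] at h1
    exact_mod_cast h1
  have hspec : ρ = ∑ i, ((lam i : ℝ) : ℂ) • outer (fun p => U p i) := by
    rw [← conj_unitary_diag]
    have := hH.spectral_theorem
    rw [← Matrix.star_eq_conjTranspose]
    exact this
  have hsumlam : ∑ i, lam i = 1 := by
    have h1 : ρ.trace = ∑ i, ((lam i : ℝ) : ℂ) := by
      rw [hspec, Matrix.trace_sum _ _]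
      refine Finset.sum_congr rfl fun i _ => ?_
      rw [Matrix.trace_smul, trace_outer, hcol i, Complex.ofReal_one, smul_eq_mul, mul_one]
    rw [htr] at h1
    have : ((∑ i, lam i : ℝ) : ℂ) = 1 := by push_cast; exact h1.symm
    exact_mod_cast this
  have hlamnn : ∀ i, 0 ≤ lam i := fun i => hPSD.eigenvalues_nonneg i
  -- reindex by Fin (card ι)
  set eI := Fintype.equivFin ι with heI
  set x : Fin (Fintype.card ι) → ι → ℂ :=
    fun j => (((Real.sqrt (lam (eI.symm j)) : ℝ)) : ℂ) • (fun p => U p (eI.symm j)) with hx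
  have hρx : ρ = ∑ j, outer (x j) := by
    rw [hspec, ← Equiv.sum_comp eI.symm (fun i => ((lam i : ℝ) : ℂ) • outer (fun p => U p i))]
    refine Finset.sum_congr rfl fun j _ => ?_
    rw [hx]
    rw [outer_smul]
    congr 1
    rw [Complex.star_def, Complex.conj_ofReal, ← Complex.ofReal_mul,
      Real.mul_self_sqrt (hlamnn _)]
  have htrx : ∑ j, ∑ i, Complex.normSq (x j i) = 1 := by
    have : ∀ j, ∑ i, Complex.normSq (x j i) = lam (eI.symm j) := by
      intro j
      rw [hx]
      simp only [Pi.smul_apply, smul_eq_mul]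
      have : ∀ i, Complex.normSq ((((Real.sqrt (lam (eI.symm j)) : ℝ)) : ℂ) * U i (eI.symm j))
          = lam (eI.symm j) * Complex.normSq (U i (eI.symm j)) := by
        intro i
        rw [Complex.normSq_mul, Complex.normSq_ofReal, Real.mul_self_sqrt (hlamnn _)]
      rw [Finset.sum_congr rfl fun i _ => this i, ← Finset.mul_sum, hcol, mul_one]
    rw [Finset.sum_congr rfl fun j _ => this j]
    rw [Equiv.sum_comp eI.symm lam]
    exact hsumlam
  obtain ⟨n', p, ψ, hdec, _⟩ := decomp_of_vectors x hρx htrx (Fintype.card ι)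
    (fun j => by
      have : T (x j) ≤ (Finset.univ : Finset ι).card := Finset.card_filter_le _ _
      simpa [Finset.card_univ] using this)
  exact ⟨n', p, ψ, hdec⟩

lemma kraus_output {M : ℕ} (hM : 0 < M) {N : ℕ} (K : Fin N → Matrix ι (Fin M) ℂ)
    (hinc : ∀ n, IncoherentPreserving (K n)) (hcomp : ∑ n, (K n)ᴴ * K n = 1) :
    ∃ n' p ψ, IsDecomposition (∑ n, K n * PsiM M * (K n)ᴴ) n' p ψ ∧
      ((Finset.univ.sup fun j => T (ψ j)) ≤ M) := by
  classical
  haveI : Nonempty (Fin M) := ⟨⟨0, hM⟩⟩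
  set v : Fin M → ℂ := fun _ => (((Real.sqrt M)⁻¹ : ℝ) : ℂ) with hv
  set x : Fin N → ι → ℂ := fun n => (K n).mulVec v with hx
  have hρx : ∑ n, K n * PsiM M * (K n)ᴴ = ∑ n, outer (x n) := by
    refine Finset.sum_congr rfl fun n _ => ?_
    rw [PsiM_eq_outer hM, hx, hv, outer_conj]
  have htrx : ∑ n, ∑ i, Complex.normSq (x n i) = 1 := by
    have h1 : (∑ n, K n * PsiM M * (K n)ᴴ).trace = 1 := by
      rw [trace_kraus K hcomp, trace_PsiM hM]
    rw [hρx] at h1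
    have h2 : (∑ n, outer (x n)).trace = ((∑ n, ∑ i, Complex.normSq (x n i) : ℝ) : ℂ) := by
      rw [Matrix.trace_sum _ _, Complex.ofReal_sum]
      exact Finset.sum_congr rfl fun n _ => trace_outer _
    rw [h2] at h1
    exact_mod_cast h1
  have hTx : ∀ n, T (x n) ≤ M := by
    intro n
    have := T_mulVec_le (K n) (incoherentPreserving_colInc (hinc n)) v
    simpa using this
  rw [hρx]
  exact decomp_of_vectors x rfl htrx M hTx

lemma logb_nat_nonneg (k : ℕ) : 0 ≤ Real.logb 2 (k : ℝ) := by
  rcases Nat.eq_zero_or_pos k with h | h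
  · simp [h]
  · exact Real.logb_nonneg one_lt_two (by exact_mod_cast h)

lemma logb_nat_mono {k m : ℕ} (hk : k ≤ m) : Real.logb 2 (k : ℝ) ≤ Real.logb 2 (m : ℝ) := by
  rcases Nat.eq_zero_or_pos k with h | h
  · rw [h]
    simpa using logb_nat_nonneg m
  · exact Real.logb_le_logb_of_le one_lt_two (by exact_mod_cast h) (by exact_mod_cast hk)

lemma C0_nonneg (σ : Matrix ι ι ℂ) : 0 ≤ C0 σ := by
  apply Real.sInf_nonneg
  rintro r ⟨n, p, ψ, hdec, rfl⟩
  exact logb_nat_nonneg _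

end AuxTheorem6c

section AuxTheorem6d

set_option linter.unusedSectionVars false
set_option maxHeartbeats 1000000

open Matrix Finset

lemma msqrt_eq_cfc {A : Matrix ι ι ℂ} (h : A.PosSemidef) : msqrt A = cfc Real.sqrt A := by
  rw [msqrt, dif_pos h, h.1.cfc_eq, Matrix.IsHermitian.cfc, Unitary.conjStarAlgAut_apply]
  rfl

lemma Fid_self {ρ : Matrix ι ι ℂ} (h : IsState ρ) : Fid ρ ρ = 1 := by
  obtain ⟨hPSD, htr⟩ := h
  have hsa : IsSelfAdjoint ρ := hPSD.1
  have hspec : ∀ x ∈ spectrum ℝ ρ, 0 ≤ x := by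
    rw [hPSD.1.spectrum_real_eq_range_eigenvalues]
    rintro _ ⟨i, rfl⟩
    exact hPSD.eigenvalues_nonneg i
  have hss : msqrt ρ * msqrt ρ = ρ := by
    rw [msqrt_eq_cfc hPSD, ← cfc_mul Real.sqrt Real.sqrt ρ]
    conv_rhs => rw [← cfc_id (R := ℝ) (a := ρ) (ha := hsa)]
    exact cfc_congr fun x hx => Real.mul_self_sqrt (hspec x hx)
  have h2 : msqrt ρ * ρ * msqrt ρ = ρ * ρ := by
    calc msqrt ρ * ρ * msqrt ρ = msqrt ρ * (msqrt ρ * msqrt ρ) * msqrt ρ := by rw [hss]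
      _ = (msqrt ρ * msqrt ρ) * (msqrt ρ * msqrt ρ) := by simp only [mul_assoc]
      _ = ρ * ρ := by rw [hss]
  have hQ : (ρ * ρ).PosSemidef := by
    have := hPSD.pow 2
    rwa [pow_two] at this
  have h3 : msqrt (ρ * ρ) = ρ := by
    have hsq : ρ * ρ = cfc (fun x : ℝ => x * x) ρ := by
      conv_lhs => rw [← cfc_id (R := ℝ) (a := ρ) (ha := hsa)]
      rw [← cfc_mul id id ρ]
      rfl
    rw [msqrt_eq_cfc hQ, hsq, ← cfc_comp Real.sqrt (fun x : ℝ => x * x) ρ hsa]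
    conv_rhs => rw [← cfc_id (R := ℝ) (a := ρ) (ha := hsa)]
    exact cfc_congr fun x hx => Real.sqrt_mul_self (hspec x hx)
  show ((msqrt (msqrt ρ * ρ * msqrt ρ)).trace.re) ^ 2 = 1
  rw [h2, h3, htr]
  norm_num

lemma isIO_of_isSIO {Λ : Matrix ι ι ℂ →ₗ[ℂ] Matrix κ κ ℂ} (h : IsSIO Λ) : IsIO Λ := by
  obtain ⟨N, K, h1, _, h3, h4⟩ := h
  exact ⟨N, K, h1, h3, h4⟩

lemma pure_kraus {d M : ℕ} (hM : 0 < M) (ψ : Fin d → ℂ)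
    (hnorm : ∑ i, Complex.normSq (ψ i) = 1) (hT : T ψ ≤ M) :
    ∃ B : Fin M → Matrix (Fin d) (Fin M) ℂ,
      (∀ m, ColInc (B m)) ∧ (∀ m, RowInc (B m)) ∧
      (∑ m, (B m)ᴴ * B m = 1) ∧ (∑ m, B m * PsiM M * (B m)ᴴ = outer ψ) := by
  classical
  haveI : NeZero M := ⟨hM.ne'⟩
  set S := Finset.univ.filter (fun i => ψ i ≠ 0) with hS
  have hcard : S.card ≤ M := hT
  have hSne : S.Nonempty := by
    have h1 := one_le_T hnorm
    exact Finset.card_pos.mp (lt_of_lt_of_le zero_lt_one h1)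
  have hgmem : ∀ j, S.orderEmbOfFin rfl j ∈ S := fun j => Finset.orderEmbOfFin_mem S rfl j
  obtain ⟨i₀, hi₀⟩ := hSne
  set g := S.orderEmbOfFin rfl with hg
  set b : Fin M → ℂ := fun i => if h : (i : ℕ) < S.card then ψ (g ⟨i, h⟩) else 0 with hb
  set E : Fin M → Fin d := fun i => if h : (i : ℕ) < S.card then g ⟨i, h⟩ else i₀ with hE
  have hbE : ∀ i i', b i ≠ 0 → b i' ≠ 0 → E i = E i' → i = i' := by
    intro i i' hi hi' hEE
    have h : (i : ℕ) < S.card := by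
      by_contra hcon
      exact hi (dif_neg hcon)
    have h' : (i' : ℕ) < S.card := by
      by_contra hcon
      exact hi' (dif_neg hcon)
    have hEi : E i = g ⟨i, h⟩ := dif_pos h
    have hEi' : E i' = g ⟨i', h'⟩ := dif_pos h'
    rw [hEi, hEi'] at hEE
    have := congrArg Fin.val (g.injective hEE)
    exact Fin.ext this
  have hbv : ∀ (j : Fin S.card), b (Fin.castLE hcard j) = ψ (g j) := by
    intro j
    have hlt : ((Fin.castLE hcard j : Fin M) : ℕ) < S.card := by simp only [Fin.coe_castLE]; exact j.2
    have heq : (⟨((Fin.castLE hcard j : Fin M) : ℕ), hlt⟩ : Fin S.card) = j := by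
      ext; simp
    calc b (Fin.castLE hcard j) = ψ (g ⟨((Fin.castLE hcard j : Fin M) : ℕ), hlt⟩) := dif_pos hlt
      _ = ψ (g j) := by rw [heq]
  have hEv : ∀ (j : Fin S.card), E (Fin.castLE hcard j) = g j := by
    intro j
    have hlt : ((Fin.castLE hcard j : Fin M) : ℕ) < S.card := by simp only [Fin.coe_castLE]; exact j.2
    have heq : (⟨((Fin.castLE hcard j : Fin M) : ℕ), hlt⟩ : Fin S.card) = j := by
      ext; simp
    calc E (Fin.castLE hcard j) = g ⟨((Fin.castLE hcard j : Fin M) : ℕ), hlt⟩ := dif_pos hlt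
      _ = g j := by rw [heq]
  have hbsum : ∀ p, ∑ i : Fin M, (if p = E i then b i else 0) = ψ p := by
    intro p
    have hvan : ∀ i : Fin M, ¬((i : ℕ) < S.card) → (if p = E i then b i else 0) = 0 := by
      intro i hi
      have hb0 : b i = 0 := dif_neg hi
      simp [hb0]
    rw [sum_truncExt hcard _ hvan]
    have hcast : ∀ j : Fin S.card,
        (if p = E (Fin.castLE hcard j) then b (Fin.castLE hcard j) else 0)
        = (if p = g j then ψ (g j) else 0) := by
      intro j
      rw [hbv j, hEv j]
    rw [Finset.sum_congr rfl fun j _ => hcast j]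
    have hsum2 := sum_orderEmbOfFin S (fun a => if p = a then ψ a else 0)
    rw [hsum2, Finset.sum_ite_eq S p ψ]
    by_cases hp : p ∈ S
    · rw [if_pos hp]
    · rw [if_neg hp]
      have hz : ¬ ψ p ≠ 0 := by
        intro hne
        exact hp (Finset.mem_filter.mpr ⟨Finset.mem_univ p, hne⟩)
      exact (not_not.mp hz).symm
  have hbnorm : ∑ i : Fin M, Complex.normSq (b i) = 1 := by
    have hvan : ∀ i : Fin M, ¬((i : ℕ) < S.card) → Complex.normSq (b i) = 0 := by
      intro i hi
      have hb0 : b i = 0 := dif_neg hi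
      simp [hb0]
    rw [sum_truncExt hcard _ hvan]
    rw [Finset.sum_congr rfl fun j _ => by rw [hbv j]]
    rw [sum_orderEmbOfFin S (fun a => Complex.normSq (ψ a))]
    rw [hS, Finset.sum_filter_of_ne (fun x _ hx => by
      intro hz
      exact hx (by rw [hz]; simp))]
    exact hnorm
  set B : Fin M → Matrix (Fin d) (Fin M) ℂ :=
    fun m => Matrix.of fun p i => if p = E (i + m) then b (i + m) else 0 with hB
  have happly : ∀ m p i, B m p i = if p = E (i + m) then b (i + m) else 0 := fun m p i => rfl
  refine ⟨B, ?_, ?_, ?_, ?_⟩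
  · intro m j p q hp hq
    have hp' : p = E (j + m) := by
      by_contra hcon
      exact hp (by rw [happly, if_neg hcon])
    have hq' : q = E (j + m) := by
      by_contra hcon
      exact hq (by rw [happly, if_neg hcon])
    rw [hp', hq']
  · intro m p i j hi hj
    have hi1 : p = E (i + m) := by
      by_contra hcon
      exact hi (by rw [happly, if_neg hcon])
    have hj1 : p = E (j + m) := by
      by_contra hcon
      exact hj (by rw [happly, if_neg hcon])
    have hbi : b (i + m) ≠ 0 := by
      intro hz
      exact hi (by rw [happly, hz]; simp)
    have hbj : b (j + m) ≠ 0 := by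
      intro hz
      exact hj (by rw [happly, hz]; simp)
    have := hbE _ _ hbi hbj (hi1 ▸ hj1 ▸ rfl)
    exact add_right_cancel this
  · ext i i'
    rw [Matrix.sum_apply]
    have hterm : ∀ m, ((B m)ᴴ * B m) i i'
        = if E (i + m) = E (i' + m) then star (b (i + m)) * b (i' + m) else 0 := by
      intro m
      rw [Matrix.mul_apply]
      have hterm2 : ∀ p, ((B m)ᴴ) i p * (B m) p i'
          = if p = E (i + m) then (if p = E (i' + m) then star (b (i + m)) * b (i' + m) else 0)
            else 0 := by
        intro p
        rw [Matrix.conjTranspose_apply, happly, happly]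
        by_cases h1 : p = E (i + m)
        · rw [if_pos h1, if_pos h1, mul_ite, mul_zero]
        · rw [if_neg h1, if_neg h1, star_zero, zero_mul]
      rw [Finset.sum_congr rfl fun p _ => hterm2 p]
      rw [Finset.sum_ite_eq' Finset.univ (E (i + m))
        (fun p => if p = E (i' + m) then star (b (i + m)) * b (i' + m) else 0)]
      rw [if_pos (Finset.mem_univ _)]
    rw [Finset.sum_congr rfl fun m _ => hterm m]
    rcases eq_or_ne i i' with rfl | hii
    · have hdg : ∀ m, (if E (i + m) = E (i + m) then star (b (i + m)) * b (i + m) else 0)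
          = ((Complex.normSq (b (i + m)) : ℝ) : ℂ) := by
        intro m
        rw [if_pos rfl, Complex.star_def, mul_comm, Complex.mul_conj]
      rw [Finset.sum_congr rfl fun m _ => hdg m]
      have hbij : ∑ m : Fin M, ((Complex.normSq (b (i + m)) : ℝ) : ℂ)
          = ∑ m : Fin M, ((Complex.normSq (b m) : ℝ) : ℂ) :=
        Fintype.sum_bijective (fun m => i + m) (Equiv.addLeft i).bijective _ _ fun m => rfl
      rw [hbij, Matrix.one_apply_eq, ← Complex.ofReal_sum, hbnorm, Complex.ofReal_one]
    · have hz : ∀ m, (if E (i + m) = E (i' + m) then star (b (i + m)) * b (i' + m) else 0) = 0 := by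
        intro m
        by_cases hE' : E (i + m) = E (i' + m)
        · rw [if_pos hE']
          by_cases hb1 : b (i + m) = 0
          · rw [hb1]; simp
          by_cases hb2 : b (i' + m) = 0
          · rw [hb2]; simp
          exact absurd (add_right_cancel (hbE _ _ hb1 hb2 hE')) hii
        · rw [if_neg hE']
      rw [Finset.sum_congr rfl fun m _ => hz m, Finset.sum_const_zero,
        Matrix.one_apply_ne hii]
  · have hout : ∀ m, B m * PsiM M * (B m)ᴴ = (((M : ℝ)⁻¹ : ℝ) : ℂ) • outer ψ := by
      intro m
      rw [PsiM_eq_outer hM, outer_conj]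
      have hmv : (B m).mulVec (fun _ => (((Real.sqrt M)⁻¹ : ℝ) : ℂ))
          = ((((Real.sqrt M)⁻¹ : ℝ) : ℂ)) • ψ := by
        funext p
        show ∑ i, B m p i * (((Real.sqrt M)⁻¹ : ℝ) : ℂ) = _
        have e1 : ∀ i : Fin M, B m p i * (((Real.sqrt M)⁻¹ : ℝ) : ℂ)
            = (if p = E (i + m) then b (i + m) else 0) * (((Real.sqrt M)⁻¹ : ℝ) : ℂ) := by
          intro i; rw [happly]
        rw [Finset.sum_congr rfl fun i _ => e1 i]
        have e2 : ∑ i : Fin M, (if p = E (i + m) then b (i + m) else 0) * (((Real.sqrt M)⁻¹ : ℝ) : ℂ)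
            = ∑ i : Fin M, (if p = E i then b i else 0) * (((Real.sqrt M)⁻¹ : ℝ) : ℂ) :=
          Fintype.sum_bijective (fun i => i + m) (Equiv.addRight m).bijective _ _ fun i => rfl
        rw [e2, ← Finset.sum_mul, hbsum p]
        rw [Pi.smul_apply, smul_eq_mul, mul_comm]
      rw [hmv, outer_smul]
      congr 1
      rw [Complex.star_def, Complex.conj_ofReal, ← Complex.ofReal_mul, ← mul_inv,
        Real.mul_self_sqrt (by positivity)]
    rw [Finset.sum_congr rfl fun m _ => hout m, Finset.sum_const, Finset.card_univ,
      Fintype.card_fin]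
    rw [← Nat.cast_smul_eq_nsmul ℂ, smul_smul]
    have hcoef : ((M : ℂ)) * (((M : ℝ)⁻¹ : ℝ) : ℂ) = 1 := by
      push_cast
      rw [mul_inv_cancel₀]
      exact_mod_cast hM.ne'
    rw [hcoef, one_smul]

lemma exists_dilution {d : ℕ} {ρ' : Matrix (Fin d) (Fin d) ℂ} {n : ℕ} {p : Fin n → ℝ}
    {ψ : Fin n → Fin d → ℂ} (hdec : IsDecomposition ρ' n p ψ) {M : ℕ} (hM : 0 < M)
    (hT : ∀ j, T (ψ j) ≤ M) :
    ∃ Λ : Matrix (Fin M) (Fin M) ℂ →ₗ[ℂ] Matrix (Fin d) (Fin d) ℂ,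
      IsSIO Λ ∧ Λ (PsiM M) = ρ' := by
  classical
  obtain ⟨hp, hpsum, hnorm, hrep⟩ := hdec
  haveI hMne : Nonempty (Fin M) := ⟨⟨0, hM⟩⟩
  have hn : 0 < n := by
    by_contra hzero
    push_neg at hzero
    have h0 : n = 0 := Nat.le_zero.mp hzero
    subst h0
    simp at hpsum
  haveI : Nonempty (Fin d) := by
    obtain ⟨i, hi⟩ : ∃ i, ψ ⟨0, hn⟩ i ≠ 0 := by
      by_contra hno
      push_neg at hno
      have hc := hnorm ⟨0, hn⟩
      rw [Finset.sum_eq_zero (fun i _ => by simp [hno i])] at hc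
      norm_num at hc
    exact ⟨i⟩
  choose B hcol hrow hcompB houtB using fun j => pure_kraus hM (ψ j) (hnorm j) (hT j)
  set K : Fin (n * M) → Matrix (Fin d) (Fin M) ℂ :=
    fun t => ((Real.sqrt (p (finProdFinEquiv.symm t).1) : ℝ) : ℂ) •
      B (finProdFinEquiv.symm t).1 (finProdFinEquiv.symm t).2 with hK
  have hcoef : ∀ j : Fin n, ((Real.sqrt (p j) : ℝ) : ℂ) * star ((Real.sqrt (p j) : ℝ) : ℂ)
      = ((p j : ℝ) : ℂ) := by
    intro j
    rw [Complex.star_def, Complex.conj_ofReal, ← Complex.ofReal_mul,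
      Real.mul_self_sqrt (hp j).le]
  refine ⟨krausChannel K, ⟨n * M, K, ?_, ?_, ?_, fun A => rfl⟩, ?_⟩
  · intro t
    apply colInc_incoherentPreserving
    exact colInc_smul _ (hcol _ _)
  · intro t
    have hKt : (K t)ᴴ = star ((Real.sqrt (p (finProdFinEquiv.symm t).1) : ℝ) : ℂ) •
        (B (finProdFinEquiv.symm t).1 (finProdFinEquiv.symm t).2)ᴴ :=
      Matrix.conjTranspose_smul _ _
    rw [hKt]
    apply colInc_incoherentPreserving
    exact colInc_smul _ (colInc_conjTranspose (hrow _ _))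
  · have hterm : ∀ t, (K t)ᴴ * K t = ((p (finProdFinEquiv.symm t).1 : ℝ) : ℂ) •
        ((B (finProdFinEquiv.symm t).1 (finProdFinEquiv.symm t).2)ᴴ *
          B (finProdFinEquiv.symm t).1 (finProdFinEquiv.symm t).2) := by
      intro t
      show (((Real.sqrt (p (finProdFinEquiv.symm t).1) : ℝ) : ℂ) •
          B (finProdFinEquiv.symm t).1 (finProdFinEquiv.symm t).2)ᴴ *
          (((Real.sqrt (p (finProdFinEquiv.symm t).1) : ℝ) : ℂ) •
          B (finProdFinEquiv.symm t).1 (finProdFinEquiv.symm t).2) = _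
      rw [Matrix.conjTranspose_smul, Matrix.smul_mul, Matrix.mul_smul, smul_smul]
      rw [mul_comm, hcoef]
    rw [Finset.sum_congr rfl fun t _ => hterm t]
    rw [Fintype.sum_equiv finProdFinEquiv.symm _
      (fun u : Fin n × Fin M => ((p u.1 : ℝ) : ℂ) • ((B u.1 u.2)ᴴ * B u.1 u.2)) (fun t => rfl)]
    rw [Fintype.sum_prod_type]
    have hinner : ∀ j, ∑ m, ((p j : ℝ) : ℂ) • ((B j m)ᴴ * B j m)
        = ((p j : ℝ) : ℂ) • (1 : Matrix (Fin M) (Fin M) ℂ) := by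
      intro j
      rw [← Finset.smul_sum, hcompB j]
    rw [Finset.sum_congr rfl fun j _ => hinner j, ← Finset.sum_smul, ← Complex.ofReal_sum,
      hpsum, Complex.ofReal_one, one_smul]
  · rw [krausChannel_apply]
    have hterm : ∀ t, K t * PsiM M * (K t)ᴴ = ((p (finProdFinEquiv.symm t).1 : ℝ) : ℂ) •
        (B (finProdFinEquiv.symm t).1 (finProdFinEquiv.symm t).2 * PsiM M *
          (B (finProdFinEquiv.symm t).1 (finProdFinEquiv.symm t).2)ᴴ) := by
      intro t
      show (((Real.sqrt (p (finProdFinEquiv.symm t).1) : ℝ) : ℂ) •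
          B (finProdFinEquiv.symm t).1 (finProdFinEquiv.symm t).2) * PsiM M *
          ((((Real.sqrt (p (finProdFinEquiv.symm t).1) : ℝ) : ℂ) •
          B (finProdFinEquiv.symm t).1 (finProdFinEquiv.symm t).2))ᴴ = _
      rw [Matrix.conjTranspose_smul, Matrix.smul_mul, Matrix.smul_mul, Matrix.mul_smul,
        smul_smul, hcoef]
    rw [Finset.sum_congr rfl fun t _ => hterm t]
    rw [Fintype.sum_equiv finProdFinEquiv.symm _
      (fun u : Fin n × Fin M => ((p u.1 : ℝ) : ℂ) • (B u.1 u.2 * PsiM M * (B u.1 u.2)ᴴ))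
      (fun t => rfl)]
    rw [Fintype.sum_prod_type]
    have hinner : ∀ j, ∑ m, ((p j : ℝ) : ℂ) • (B j m * PsiM M * (B j m)ᴴ)
        = ((p j : ℝ) : ℂ) • outer (ψ j) := by
      intro j
      rw [← Finset.smul_sum, houtB j]
    rw [Finset.sum_congr rfl fun j _ => hinner j, hrep]
    exact Finset.sum_congr rfl fun j _ => (realSmul_eq _ _).symm

end AuxTheorem6d
/-- Theorem 6: `C_IO^ε(ρ) = C_SIO^ε(ρ) = C_0^ε(ρ)`. -/
theorem CIOeps_CSIOeps_eq_C0eps {d : ℕ} (ρ : Matrix (Fin d) (Fin d) ℂ) (hρ : IsState ρ)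
    (ε : ℝ) (hε : 0 ≤ ε) :
    CIOeps ρ ε = C0eps ρ ε ∧ CSIOeps ρ ε = C0eps ρ ε := by
  classical
  have hFidself : Fid ρ ρ = 1 := Fid_self hρ
  have hfid0 : 1 - ε ≤ Fid ρ ρ := by rw [hFidself]; linarith
  have hlbIO : ∀ r ∈ {r | ∃ M : ℕ, 1 ≤ M ∧ r = Real.logb 2 M ∧
      ∃ Λ : Matrix (Fin M) (Fin M) ℂ →ₗ[ℂ] Matrix (Fin d) (Fin d) ℂ,
        IsIO Λ ∧ 1 - ε ≤ Fid ρ (Λ (PsiM M))}, (0:ℝ) ≤ r := by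
    rintro r ⟨M, hM1, rfl, -⟩
    exact logb_nat_nonneg M
  have hlbSIO : ∀ r ∈ {r | ∃ M : ℕ, 1 ≤ M ∧ r = Real.logb 2 M ∧
      ∃ Λ : Matrix (Fin M) (Fin M) ℂ →ₗ[ℂ] Matrix (Fin d) (Fin d) ℂ,
        IsSIO Λ ∧ 1 - ε ≤ Fid ρ (Λ (PsiM M))}, (0:ℝ) ≤ r := by
    rintro r ⟨M, hM1, rfl, -⟩
    exact logb_nat_nonneg M
  have step1 : ∀ (ρ' : Matrix (Fin d) (Fin d) ℂ), IsState ρ' → 1 - ε ≤ Fid ρ ρ' →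
      ∀ (n : ℕ) (pp : Fin n → ℝ) (ψ : Fin n → Fin d → ℂ), IsDecomposition ρ' n pp ψ →
      (Real.logb 2 ((Finset.univ.sup fun j => T (ψ j) : ℕ) : ℝ) ∈
        {r | ∃ M : ℕ, 1 ≤ M ∧ r = Real.logb 2 M ∧
          ∃ Λ : Matrix (Fin M) (Fin M) ℂ →ₗ[ℂ] Matrix (Fin d) (Fin d) ℂ,
            IsSIO Λ ∧ 1 - ε ≤ Fid ρ (Λ (PsiM M))}) ∧
      (Real.logb 2 ((Finset.univ.sup fun j => T (ψ j) : ℕ) : ℝ) ∈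
        {r | ∃ M : ℕ, 1 ≤ M ∧ r = Real.logb 2 M ∧
          ∃ Λ : Matrix (Fin M) (Fin M) ℂ →ₗ[ℂ] Matrix (Fin d) (Fin d) ℂ,
            IsIO Λ ∧ 1 - ε ≤ Fid ρ (Λ (PsiM M))}) := by
    intro ρ' hst hfid n pp ψ hdec
    have hn : 0 < n := by
      by_contra h0
      push_neg at h0
      have h00 : n = 0 := Nat.le_zero.mp h0
      subst h00
      have := hdec.2.1
      simp at this
    have hM : 0 < Finset.univ.sup fun j => T (ψ j) := by
      have h1 : 1 ≤ T (ψ ⟨0, hn⟩) := one_le_T (hdec.2.2.1 ⟨0, hn⟩)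
      exact lt_of_lt_of_le h1 (Finset.le_sup (f := fun j => T (ψ j)) (Finset.mem_univ (⟨0, hn⟩ : Fin n)))
    obtain ⟨Λ, hSIO, hΛ⟩ := exists_dilution hdec hM (fun j => Finset.le_sup (f := fun j => T (ψ j)) (Finset.mem_univ j))
    exact ⟨⟨_, hM, rfl, Λ, hSIO, by rw [hΛ]; exact hfid⟩,
      ⟨_, hM, rfl, Λ, isIO_of_isSIO hSIO, by rw [hΛ]; exact hfid⟩⟩
  have step2 : ∀ r ∈ {r | ∃ M : ℕ, 1 ≤ M ∧ r = Real.logb 2 M ∧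
      ∃ Λ : Matrix (Fin M) (Fin M) ℂ →ₗ[ℂ] Matrix (Fin d) (Fin d) ℂ,
        IsIO Λ ∧ 1 - ε ≤ Fid ρ (Λ (PsiM M))}, C0eps ρ ε ≤ r := by
    rintro r ⟨M, hM1, rfl, Λ, hIO, hfid⟩
    obtain ⟨N, K, hinc, hcomp, happ⟩ := hIO
    obtain ⟨n', pp, ψψ, hdec', hsup⟩ :=
      kraus_output (lt_of_lt_of_le zero_lt_one hM1) K hinc hcomp
    have hρ'eq : Λ (PsiM M) = ∑ nn, K nn * PsiM M * (K nn)ᴴ := happ _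
    have hdec'' : IsDecomposition (Λ (PsiM M)) n' pp ψψ := by rw [hρ'eq]; exact hdec'
    have hC0le : C0 (Λ (PsiM M)) ≤ Real.logb 2 (M : ℝ) := by
      have h1 : C0 (Λ (PsiM M))
          ≤ Real.logb 2 ((Finset.univ.sup fun j => T (ψψ j) : ℕ) : ℝ) := by
        apply csInf_le
        · refine ⟨0, ?_⟩
          rintro t ⟨n2, p2, ψ2, hd2, rfl⟩
          exact logb_nat_nonneg _
        · exact ⟨n', pp, ψψ, hdec'', rfl⟩
      exact le_trans h1 (logb_nat_mono hsup)
    have hmemC0 : C0 (Λ (PsiM M)) ∈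
        {r | ∃ ρ'', IsState ρ'' ∧ 1 - ε ≤ Fid ρ ρ'' ∧ r = C0 ρ''} :=
      ⟨Λ (PsiM M), by rw [hρ'eq]; exact isState_of_decomposition hdec', hfid, rfl⟩
    refine le_trans (csInf_le ⟨0, ?_⟩ hmemC0) hC0le
    rintro t ⟨σ, -, -, rfl⟩
    exact C0_nonneg σ
  obtain ⟨n0, p0, ψ0, hdec0⟩ := exists_state_decomposition hρ
  obtain ⟨hmemSIO0, hmemIO0⟩ := step1 ρ hρ hfid0 n0 p0 ψ0 hdec0
  have hge : C0eps ρ ε ≤ CIOeps ρ ε := le_csInf ⟨_, hmemIO0⟩ step2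
  have hgeS : C0eps ρ ε ≤ CSIOeps ρ ε := by
    refine le_csInf ⟨_, hmemSIO0⟩ ?_
    rintro r ⟨M, hM1, rfl, Λ, hSIO, hfid⟩
    exact step2 _ ⟨M, hM1, rfl, Λ, isIO_of_isSIO hSIO, hfid⟩
  have hC0epsne : {r | ∃ ρ'', IsState ρ'' ∧ 1 - ε ≤ Fid ρ ρ'' ∧ r = C0 ρ''}.Nonempty :=
    ⟨C0 ρ, ρ, hρ, hfid0, rfl⟩
  have hleIO : CIOeps ρ ε ≤ C0eps ρ ε := by
    refine le_csInf hC0epsne ?_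
    rintro r ⟨ρ', hst, hfid, rfl⟩
    obtain ⟨n1, p1, ψ1, hdec1⟩ := exists_state_decomposition hst
    refine le_csInf ⟨_, ⟨n1, p1, ψ1, hdec1, rfl⟩⟩ ?_
    rintro s ⟨n2, p2, ψ2, hdec2, rfl⟩
    exact csInf_le ⟨0, hlbIO⟩ (step1 ρ' hst hfid n2 p2 ψ2 hdec2).2
  have hleSIO : CSIOeps ρ ε ≤ C0eps ρ ε := by
    refine le_csInf hC0epsne ?_
    rintro r ⟨ρ', hst, hfid, rfl⟩
    obtain ⟨n1, p1, ψ1, hdec1⟩ := exists_state_decomposition hst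
    refine le_csInf ⟨_, ⟨n1, p1, ψ1, hdec1, rfl⟩⟩ ?_
    rintro s ⟨n2, p2, ψ2, hdec2, rfl⟩
    exact csInf_le ⟨0, hlbSIO⟩ (step1 ρ' hst hfid n2 p2 ψ2 hdec2).1
  exact ⟨le_antisymm hleIO hge, le_antisymm hleSIO hgeS⟩

end OneShot
end
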